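/- arXiv:2104.13846 — 4 statements merged into one kernel-verified Lean document; each statement's English description precedes it below -/
import Mathlib

section
/- The up and down operators on Young's lattice satisfy the commutation relation DU - UD = I, where U and D are the linear maps on the free rational vector space on partitions defined by Uλ = Σ_{ν⋗λ} ν and Dλ = Σ_{μ⋖λ} μ. -/
/-- `YDCovers μ λ` means `μ ⋖ λ` in Young's lattice: `μ ⊆ λ` and `|λ| = |μ| + 1`. -/
def YDCovers (μ ν : YoungDiagram) : Prop :=
  μ.cells ⊆ ν.cells ∧ ν.cells.card = μ.cells.card + 1

lemma YD_row_lt_card {l : YoungDiagram} {i j : ℕ} (h : (i, j) ∈ l) :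
    i < l.cells.card := by
  have hsub : (Finset.range (i + 1)).image (fun k => (k, j)) ⊆ l.cells := by
    intro p hp
    simp only [Finset.mem_image, Finset.mem_range] at hp
    obtain ⟨k, hk, rfl⟩ := hp
    simpa [YoungDiagram.mem_cells] using
      l.up_left_mem (Nat.lt_succ_iff.mp hk) le_rfl h
  have hc := Finset.card_le_card hsub
  rwa [Finset.card_image_of_injective _ (fun a b hab => by
      simpa using congrArg Prod.fst hab), Finset.card_range] at hc

lemma YD_col_lt_card {l : YoungDiagram} {i j : ℕ} (h : (i, j) ∈ l) :
    j < l.cells.card := by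
  have hsub : (Finset.range (j + 1)).image (fun k => (i, k)) ⊆ l.cells := by
    intro p hp
    simp only [Finset.mem_image, Finset.mem_range] at hp
    obtain ⟨k, hk, rfl⟩ := hp
    simpa [YoungDiagram.mem_cells] using
      l.up_left_mem le_rfl (Nat.lt_succ_iff.mp hk) h
  have hc := Finset.card_le_card hsub
  rwa [Finset.card_image_of_injective _ (fun a b hab => by
      simpa using congrArg Prod.snd hab), Finset.card_range] at hc

lemma YD_finite_bounded (B : Finset (ℕ × ℕ)) :
    {l : YoungDiagram | l.cells ⊆ B}.Finite := by
  have himg : (YoungDiagram.cells '' {l : YoungDiagram | l.cells ⊆ B}).Finite := by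
    refine Set.Finite.subset (B.powerset : Finset (Finset (ℕ × ℕ))).finite_toSet ?_
    rintro s ⟨l, hl, rfl⟩
    simpa using hl
  refine Set.Finite.of_finite_image himg ?_
  intro a _ b _ hab
  cases a; cases b; simpa using hab

lemma YD_finite_down (l : YoungDiagram) : {m : YoungDiagram | YDCovers m l}.Finite :=
  (YD_finite_bounded l.cells).subset fun _ hm => hm.1

lemma YD_finite_up (l : YoungDiagram) : {n : YoungDiagram | YDCovers l n}.Finite := by
  refine (YD_finite_bounded
    (Finset.range (l.cells.card + 1) ×ˢ Finset.range (l.cells.card + 1))).subset ?_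
  rintro n ⟨_, hcard⟩ c hc
  obtain ⟨i, j⟩ := c
  have hmem : (i, j) ∈ n := by simpa [YoungDiagram.mem_cells] using hc
  have h1 : i < n.cells.card := YD_row_lt_card hmem
  have h2 : j < n.cells.card := YD_col_lt_card hmem
  simp only [Finset.mem_product, Finset.mem_range]
  omega

/-- The set 𝒰(λ) of diagrams covering `l`, as a `Finset`. -/
noncomputable def upFinset (l : YoungDiagram) : Finset YoungDiagram :=
  (YD_finite_up l).toFinset

/-- The set 𝒟(λ) of diagrams covered by `l`, as a `Finset`. -/
noncomputable def downFinset (l : YoungDiagram) : Finset YoungDiagram :=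
  (YD_finite_down l).toFinset

/-- Standard Young tableaux of shape `l`, encoded as saturated chains
`⊥ = T 0 ⋖ T 1 ⋖ ⋯ ⋖ T n = l` in Young's lattice. -/
def SYTset (l : YoungDiagram) : Set (ℕ → YoungDiagram) :=
  {T | T 0 = ⊥ ∧ (∀ i, i < l.cells.card → YDCovers (T i) (T (i + 1))) ∧
    ∀ i, l.cells.card ≤ i → T i = l}

/-- `fTab l` is the number of standard Young tableaux of shape `l`. -/
noncomputable def fTab (l : YoungDiagram) : ℕ := Nat.card (SYTset l)

/-- arm-length of a cell -/
def armLen (l : YoungDiagram) (c : ℕ × ℕ) : ℕ := l.rowLen c.1 - (c.2 + 1)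

/-- leg-length of a cell -/
def legLen (l : YoungDiagram) (c : ℕ × ℕ) : ℕ := l.colLen c.2 - (c.1 + 1)

/-- hook-length of a cell -/
def hookLen (l : YoungDiagram) (c : ℕ × ℕ) : ℕ := armLen l c + legLen l c + 1

/-- product of all hook-lengths of a diagram -/
def Hprod (l : YoungDiagram) : ℕ := ∏ c ∈ l.cells, hookLen l c

/-- For `r ⋖ k`, the unique box of `k / r`. -/
def diffBox (r k : YoungDiagram) : ℕ × ℕ := (k.cells \ r.cells).sup id

/-- Given the removed box `bm = λ/μ` and the added box `bn = ν/λ`, the unique cell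
`c_{μ,ν}` of `λ` in the row of one box and the column of the other. -/
def cellC (l : YoungDiagram) (bm bn : ℕ × ℕ) : ℕ × ℕ :=
  if (bm.1, bn.2) ∈ l.cells then (bm.1, bn.2) else (bn.1, bm.2)

/-- The field ℚ(q,t). -/
abbrev Kqt : Type := FractionRing (MvPolynomial (Fin 2) ℚ)

noncomputable def qq : Kqt := algebraMap (MvPolynomial (Fin 2) ℚ) Kqt (MvPolynomial.X 0)
noncomputable def tt : Kqt := algebraMap (MvPolynomial (Fin 2) ℚ) Kqt (MvPolynomial.X 1)

/-- `[h_κ(c)]^ℓ = 1 - q^{a} t^{ℓ+1}`. -/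
noncomputable def hkL (k : YoungDiagram) (c : ℕ × ℕ) : Kqt :=
  1 - qq ^ armLen k c * tt ^ (legLen k c + 1)

/-- `[h_κ(c)]^a = 1 - q^{a+1} t^{ℓ}`. -/
noncomputable def hkA (k : YoungDiagram) (c : ℕ × ℕ) : Kqt :=
  1 - qq ^ (armLen k c + 1) * tt ^ legLen k c

/-- `b_κ(c)`. -/
noncomputable def bqt (k : YoungDiagram) (c : ℕ × ℕ) : Kqt := hkL k c / hkA k c

/-- cells of `r` in the row of the box `k/r` (the set ℛ_{κ/ρ}). -/
def rowCells (r k : YoungDiagram) : Finset (ℕ × ℕ) :=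
  r.cells.filter (fun c => c.1 = (diffBox r k).1)

/-- cells of `r` in the column of the box `k/r` (the set 𝒞_{κ/ρ}). -/
def colCells (r k : YoungDiagram) : Finset (ℕ × ℕ) :=
  r.cells.filter (fun c => c.2 = (diffBox r k).2)

/-- `ψ_{κ/ρ}(q,t)` for a single-box skew shape `κ/ρ`. -/
noncomputable def psiE (r k : YoungDiagram) : Kqt :=
  ∏ c ∈ rowCells r k \ colCells r k, bqt r c / bqt k c

/-- `φ_{κ/ρ}(q,t)` for a single-box skew shape `κ/ρ`. -/
noncomputable def phiE (r k : YoungDiagram) : Kqt :=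
  bqt k (diffBox r k) * ∏ c ∈ colCells r k, bqt k c / bqt r c

/-- `α_{κ/ρ}`. -/
noncomputable def alphaE (r k : YoungDiagram) : Kqt :=
  (∏ c ∈ rowCells r k, hkL r c / hkL k c) * ∏ c ∈ colCells r k, hkA r c / hkA k c

/-- `ᾱ_{κ/ρ}`. -/
noncomputable def alphaBarE (r k : YoungDiagram) : Kqt :=
  (∏ c ∈ rowCells r k, hkA r c / hkA k c) * ∏ c ∈ colCells r k, hkL r c / hkL k c

/-- `η_{ν/λ/μ}` in terms of the removed box `bm = λ/μ` and the added box `bn = ν/λ`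
(rows and columns here are 0-indexed, so e.g. `r_ν - r_μ = bn.1 - bm.1`). -/
noncomputable def etaE (bm bn : ℕ × ℕ) : Kqt :=
  (1 - qq) * (1 - tt) /
    ((1 - qq ^ ((bm.2 : ℤ) - bn.2) * tt ^ ((bn.1 : ℤ) - bm.1)) *
     (1 - qq ^ ((bm.2 : ℤ) - bn.2 + 1) * tt ^ ((bn.1 : ℤ) - bm.1 - 1)))

/-- `𝒫_λ(λ → ν) = t^{r_ν - 1} α_{ν/λ}` (0-indexed: `r_ν - 1 = (diffBox l n).1`). -/
noncomputable def Ptop (l n : YoungDiagram) : Kqt :=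
  tt ^ (diffBox l n).1 * alphaE l n

/-- `𝒫_λ(μ → ν)` for `μ ∈ 𝒟(λ)`. -/
noncomputable def Pmove (l m n : YoungDiagram) : Kqt :=
  tt ^ (((diffBox l n).1 : ℤ) - (diffBox m l).1 - 1) * (alphaE l n / alphaE m l) *
    etaE (diffBox m l) (diffBox l n)

/-- `𝒫̄_λ(λ ← ν) = t^{r_ν - 1} ᾱ_{ν/λ}`. -/
noncomputable def PbarTop (l n : YoungDiagram) : Kqt :=
  tt ^ (diffBox l n).1 * alphaBarE l n

/-- `𝒫̄_λ(μ ← ν)` for `μ ∈ 𝒟(λ)`. -/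
noncomputable def PbarMove (l m n : YoungDiagram) : Kqt :=
  tt ^ (((diffBox l n).1 : ℤ) - (diffBox m l).1 - 1) * (alphaBarE l n / alphaBarE m l) *
    etaE (diffBox m l) (diffBox l n)

/-- `ψ_T(q,t)` for a standard tableau encoded as a chain of shapes. -/
noncomputable def psiT (n : ℕ) (T : ℕ → YoungDiagram) : Kqt :=
  ∏ i ∈ Finset.range n, psiE (T i) (T (i + 1))

/-- `φ_T(q,t)` for a standard tableau encoded as a chain of shapes. -/
noncomputable def phiT (n : ℕ) (T : ℕ → YoungDiagram) : Kqt :=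
  ∏ i ∈ Finset.range n, phiE (T i) (T (i + 1))

/-- The up operator `U` on ℚ𝕐. -/
noncomputable def Uop : Module.End ℚ (YoungDiagram →₀ ℚ) :=
  Finsupp.lsum ℚ fun l => LinearMap.toSpanSingleton ℚ _
    (∑ n ∈ upFinset l, Finsupp.single n (1 : ℚ))

/-- The down operator `D` on ℚ𝕐. -/
noncomputable def Dop : Module.End ℚ (YoungDiagram →₀ ℚ) :=
  Finsupp.lsum ℚ fun l => LinearMap.toSpanSingleton ℚ _
    (∑ m ∈ downFinset l, Finsupp.single m (1 : ℚ))

/-- The (q,t)-up operator `U_{q,t}`. -/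
noncomputable def Uqt : Module.End Kqt (YoungDiagram →₀ Kqt) :=
  Finsupp.lsum Kqt fun l => LinearMap.toSpanSingleton Kqt _
    (∑ n ∈ upFinset l, Finsupp.single n (psiE l n))

/-- The (q,t)-down operator `D_{q,t}`. -/
noncomputable def Dqt : Module.End Kqt (YoungDiagram →₀ Kqt) :=
  Finsupp.lsum Kqt fun l => LinearMap.toSpanSingleton Kqt _
    (∑ m ∈ downFinset l, Finsupp.single m (phiE m l))

/-! ### Auxiliary lemmas for the commutation relation -/

lemma mem_upFinset {l n : YoungDiagram} : n ∈ upFinset l ↔ YDCovers l n := by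
  simp [upFinset]

lemma mem_downFinset {l m : YoungDiagram} : m ∈ downFinset l ↔ YDCovers m l := by
  simp [downFinset]

lemma cover_exists_cell {l n : YoungDiagram} (h : YDCovers l n) :
    ∃ c, c ∉ l.cells ∧ n.cells = insert c l.cells := by
  have h1 : (n.cells \ l.cells).card = 1 := by
    have h2 := h.2; rw [Finset.card_sdiff_of_subset h.1]; omega
  obtain ⟨c, hc⟩ := Finset.card_eq_one.mp h1
  have hcm : c ∈ n.cells \ l.cells := hc ▸ Finset.mem_singleton_self c
  refine ⟨c, (Finset.mem_sdiff.mp hcm).2, ?_⟩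
  have := Finset.sdiff_union_of_subset h.1
  rw [hc] at this
  rw [Finset.insert_eq]
  exact this.symm

lemma diffBox_eq {r k : YoungDiagram} {c : ℕ × ℕ} (hc : c ∉ r.cells)
    (h : k.cells = insert c r.cells) : diffBox r k = c := by
  have : k.cells \ r.cells = {c} := by
    rw [h, Finset.insert_sdiff_of_notMem _ hc, Finset.sdiff_self]; rfl
  rw [diffBox, this, Finset.sup_singleton, id]

lemma cover_cell_spec {l n : YoungDiagram} {c : ℕ × ℕ}
    (hc : c ∉ l.cells) (hn : n.cells = insert c l.cells) :
    c.2 = l.rowLen c.1 ∧ (c.1 = 0 ∨ l.rowLen c.1 < l.rowLen (c.1 - 1)) := by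
  have hcn : c ∈ n.cells := by rw [hn]; exact Finset.mem_insert_self _ _
  have hmem : ∀ p : ℕ × ℕ, p ≤ c → p ≠ c → p ∈ l.cells := by
    intro p hp hne
    have : p ∈ n.cells := n.isLowerSet hp hcn
    rw [hn, Finset.mem_insert] at this
    tauto
  have hle : l.rowLen c.1 ≤ c.2 := by
    by_contra hlt
    push_neg at hlt
    exact hc (by simpa [YoungDiagram.mem_cells] using
      YoungDiagram.mem_iff_lt_rowLen.mpr hlt : (c.1, c.2) ∈ l.cells)
  have hge : c.2 ≤ l.rowLen c.1 := by
    by_contra hlt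
    push_neg at hlt
    have h1 : ((c.1, l.rowLen c.1) : ℕ × ℕ) ≤ c := by
      constructor <;> simp [le_of_lt hlt]
    have h2 : ((c.1, l.rowLen c.1) : ℕ × ℕ) ≠ c := by
      intro h
      have := congrArg Prod.snd h
      simp at this
      omega
    have := hmem _ h1 h2
    rw [YoungDiagram.mem_cells, YoungDiagram.mem_iff_lt_rowLen] at this
    omega
  refine ⟨le_antisymm hge hle, ?_⟩
  rcases Nat.eq_zero_or_pos c.1 with h0 | h0
  · exact Or.inl h0
  · right
    have h1 : ((c.1 - 1, c.2) : ℕ × ℕ) ≤ c := by constructor <;> simp [Nat.sub_le]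
    have h2 : ((c.1 - 1, c.2) : ℕ × ℕ) ≠ c := by
      intro h
      have := congrArg Prod.fst h
      simp at this
      omega
    have := hmem _ h1 h2
    rw [YoungDiagram.mem_cells, YoungDiagram.mem_iff_lt_rowLen] at this
    omega

/-- The diagram obtained by adding a box at the end of row `i` (when legal). -/
noncomputable def addDiag (l : YoungDiagram) (i : ℕ) : YoungDiagram :=
  if h : i = 0 ∨ l.rowLen i < l.rowLen (i - 1) then
    { cells := insert (i, l.rowLen i) l.cells
      isLowerSet := by
        rintro ⟨a, b⟩ ⟨x, y⟩ ⟨hx, hy⟩ hab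
        simp only [Finset.coe_insert, Set.mem_insert_iff, Finset.mem_coe,
          Prod.mk.injEq] at hab ⊢
        rcases hab with ⟨rfl, rfl⟩ | hab
        · simp only at hx hy
          rcases eq_or_lt_of_le hx with rfl | hxlt
          · rcases eq_or_lt_of_le hy with rfl | hylt
            · tauto
            · right
              rw [YoungDiagram.mem_cells, YoungDiagram.mem_iff_lt_rowLen]
              exact hylt
          · right
            rw [YoungDiagram.mem_cells, YoungDiagram.mem_iff_lt_rowLen]
            have hcorner : l.rowLen a < l.rowLen (a - 1) := by
              rcases h with h0 | h1
              · omega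
              · exact h1
            have : l.rowLen (a - 1) ≤ l.rowLen x := l.rowLen_anti x (a - 1) (by omega)
            omega
        · right
          exact l.isLowerSet (Prod.mk_le_mk.mpr ⟨hx, hy⟩) hab }
  else l

lemma addDiag_cells {l : YoungDiagram} {i : ℕ}
    (h : i = 0 ∨ l.rowLen i < l.rowLen (i - 1)) :
    (addDiag l i).cells = insert (i, l.rowLen i) l.cells := by
  rw [addDiag, dif_pos h]

lemma rowLen_self_not_mem (l : YoungDiagram) (i : ℕ) : (i, l.rowLen i) ∉ l.cells := by
  rw [YoungDiagram.mem_cells, YoungDiagram.mem_iff_lt_rowLen]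
  omega

lemma addDiag_covers {l : YoungDiagram} {i : ℕ}
    (h : i = 0 ∨ l.rowLen i < l.rowLen (i - 1)) : YDCovers l (addDiag l i) := by
  constructor
  · rw [addDiag_cells h]; exact Finset.subset_insert _ _
  · rw [addDiag_cells h, Finset.card_insert_of_notMem (rowLen_self_not_mem l i)]

/-- The diagram obtained by removing the last box of row `i` (when legal). -/
noncomputable def remDiag (l : YoungDiagram) (i : ℕ) : YoungDiagram :=
  if h : l.rowLen (i + 1) < l.rowLen i then
    { cells := l.cells.erase (i, l.rowLen i - 1)
      isLowerSet := by
        rintro ⟨a, b⟩ ⟨x, y⟩ ⟨hx, hy⟩ hab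
        simp only [Finset.coe_erase, Set.mem_diff, Finset.mem_coe,
          Set.mem_singleton_iff, Prod.mk.injEq, not_and] at hab ⊢
        obtain ⟨habl, habne⟩ := hab
        refine ⟨l.isLowerSet (Prod.mk_le_mk.mpr ⟨hx, hy⟩) habl, ?_⟩
        rintro rfl rfl
        simp only at hx hy
        have hbl : b < l.rowLen a := YoungDiagram.mem_iff_lt_rowLen.mp habl
        rcases eq_or_lt_of_le hx with rfl | hxlt
        · omega
        · have : l.rowLen a ≤ l.rowLen (x + 1) := l.rowLen_anti (x + 1) a (by omega)
          omega }
  else l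

lemma remDiag_cells {l : YoungDiagram} {i : ℕ} (h : l.rowLen (i + 1) < l.rowLen i) :
    (remDiag l i).cells = l.cells.erase (i, l.rowLen i - 1) := by
  rw [remDiag, dif_pos h]

lemma remDiag_covers {l : YoungDiagram} {i : ℕ} (h : l.rowLen (i + 1) < l.rowLen i) :
    YDCovers (remDiag l i) l := by
  have hmem : (i, l.rowLen i - 1) ∈ l.cells := by
    rw [YoungDiagram.mem_cells, YoungDiagram.mem_iff_lt_rowLen]
    omega
  constructor
  · rw [remDiag_cells h]; exact Finset.erase_subset _ _
  · rw [remDiag_cells h, Finset.card_erase_of_mem hmem]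
    have : 0 < l.cells.card := Finset.card_pos.mpr ⟨_, hmem⟩
    omega

lemma remDiag_insert {l : YoungDiagram} {i : ℕ} (h : l.rowLen (i + 1) < l.rowLen i) :
    l.cells = insert (i, l.rowLen i - 1) (remDiag l i).cells := by
  have hmem : (i, l.rowLen i - 1) ∈ l.cells := by
    rw [YoungDiagram.mem_cells, YoungDiagram.mem_iff_lt_rowLen]
    omega
  rw [remDiag_cells h, Finset.insert_erase hmem]

/-- Rows where a box can be added. -/
noncomputable def addRows (l : YoungDiagram) : Finset ℕ :=
  (Finset.range (l.colLen 0 + 1)).filter (fun i => i = 0 ∨ l.rowLen i < l.rowLen (i - 1))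

/-- Rows where a box can be removed. -/
noncomputable def remRows (l : YoungDiagram) : Finset ℕ :=
  (Finset.range (l.colLen 0)).filter (fun i => l.rowLen (i + 1) < l.rowLen i)

lemma down_cover_spec {l m : YoungDiagram} (h : YDCovers m l) :
    (diffBox m l).2 = l.rowLen (diffBox m l).1 - 1 ∧
      l.rowLen ((diffBox m l).1 + 1) < l.rowLen (diffBox m l).1 := by
  obtain ⟨c, hc, hcells⟩ := cover_exists_cell h
  rw [diffBox_eq hc hcells]
  have hcl : c ∈ l.cells := by rw [hcells]; exact Finset.mem_insert_self _ _
  have hspec := cover_cell_spec hc hcells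
  -- l.rowLen c.1 = c.2 + 1
  have h1 : c.2 < l.rowLen c.1 := by
    rw [YoungDiagram.mem_cells] at hcl
    exact YoungDiagram.mem_iff_lt_rowLen.mp (by simpa using hcl)
  have h2 : l.rowLen c.1 ≤ c.2 + 1 := by
    by_contra hlt
    push_neg at hlt
    have : ((c.1, c.2 + 1) : ℕ × ℕ) ∈ l.cells := by
      rw [YoungDiagram.mem_cells, YoungDiagram.mem_iff_lt_rowLen]
      omega
    rw [hcells, Finset.mem_insert] at this
    rcases this with heq | hm
    · have := congrArg Prod.snd heq
      simp at this
    · have := YoungDiagram.mem_iff_lt_rowLen.mp (by simpa using hm : (c.1, c.2 + 1) ∈ m)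
      omega
  have hrl : l.rowLen c.1 = c.2 + 1 := by omega
  refine ⟨by omega, ?_⟩
  have h3 : l.rowLen (c.1 + 1) ≤ c.2 := by
    by_contra hlt
    push_neg at hlt
    have : ((c.1 + 1, c.2) : ℕ × ℕ) ∈ l.cells := by
      rw [YoungDiagram.mem_cells, YoungDiagram.mem_iff_lt_rowLen]
      omega
    rw [hcells, Finset.mem_insert] at this
    rcases this with heq | hm
    · have := congrArg Prod.fst heq
      simp at this
    · have hmm : ((c.1 + 1, c.2) : ℕ × ℕ) ∈ m := by simpa using hm
      have : ((c.1, c.2) : ℕ × ℕ) ∈ m := m.up_left_mem (Nat.le_succ c.1) le_rfl hmm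
      exact hc (by simpa using this)
  omega

lemma card_upFinset (l : YoungDiagram) : (upFinset l).card = (addRows l).card := by
  apply Finset.card_bij' (fun n _ => (diffBox l n).1)
    (fun i _ => addDiag l i)
  · intro n hn
    rw [mem_upFinset] at hn
    obtain ⟨c, hc, hcells⟩ := cover_exists_cell hn
    rw [diffBox_eq hc hcells]
    obtain ⟨hc2, hcorner⟩ := cover_cell_spec hc hcells
    rw [addRows, Finset.mem_filter, Finset.mem_range]
    refine ⟨?_, hcorner⟩
    rcases hcorner with h0 | hcor
    · omega
    · have : (0 : ℕ) < l.rowLen (c.1 - 1) := by omega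
      have : ((c.1 - 1, 0) : ℕ × ℕ) ∈ l := YoungDiagram.mem_iff_lt_rowLen.mpr this
      have := YoungDiagram.mem_iff_lt_colLen.mp this
      rcases Nat.eq_zero_or_pos c.1 with h | h <;> omega
  · intro i hi
    rw [addRows, Finset.mem_filter] at hi
    exact mem_upFinset.mpr (addDiag_covers hi.2)
  · intro n hn
    rw [mem_upFinset] at hn
    obtain ⟨c, hc, hcells⟩ := cover_exists_cell hn
    rw [diffBox_eq hc hcells]
    obtain ⟨hc2, hcorner⟩ := cover_cell_spec hc hcells
    ext p
    simp only [← YoungDiagram.mem_cells, addDiag_cells hcorner, hcells, ← hc2]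
  · intro i hi
    rw [addRows, Finset.mem_filter] at hi
    rw [diffBox_eq (rowLen_self_not_mem l i) (addDiag_cells hi.2)]

lemma card_downFinset (l : YoungDiagram) : (downFinset l).card = (remRows l).card := by
  apply Finset.card_bij' (fun m _ => (diffBox m l).1)
    (fun i _ => remDiag l i)
  · intro m hm
    rw [mem_downFinset] at hm
    obtain ⟨h2, hcor⟩ := down_cover_spec hm
    rw [remRows, Finset.mem_filter, Finset.mem_range]
    refine ⟨?_, hcor⟩
    have : (0 : ℕ) < l.rowLen (diffBox m l).1 := by omega
    have : (((diffBox m l).1, 0) : ℕ × ℕ) ∈ l := YoungDiagram.mem_iff_lt_rowLen.mpr this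
    exact YoungDiagram.mem_iff_lt_colLen.mp this
  · intro i hi
    rw [remRows, Finset.mem_filter] at hi
    exact mem_downFinset.mpr (remDiag_covers hi.2)
  · intro m hm
    rw [mem_downFinset] at hm
    obtain ⟨h2, hcor⟩ := down_cover_spec hm
    obtain ⟨c, hc, hcells⟩ := cover_exists_cell hm
    have hdb : diffBox m l = c := diffBox_eq hc hcells
    rw [hdb] at h2 hcor
    ext p
    rw [hdb]
    simp only [← YoungDiagram.mem_cells, remDiag_cells hcor]
    constructor
    · intro hp
      rw [Finset.mem_erase] at hp
      have := hp.2
      rw [hcells, Finset.mem_insert] at this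
      rcases this with heq | hmm
      · exact absurd (by rw [heq, ← h2]) hp.1
      · exact hmm
    · intro hp
      rw [Finset.mem_erase]
      refine ⟨?_, hcells ▸ Finset.mem_insert_of_mem hp⟩
      rintro rfl
      rw [← h2] at hp
      exact hc hp
  · intro i hi
    rw [remRows, Finset.mem_filter] at hi
    have hc : ((i, l.rowLen i - 1) : ℕ × ℕ) ∉ (remDiag l i).cells := by
      rw [remDiag_cells hi.2]
      exact Finset.notMem_erase _ _
    rw [diffBox_eq hc (remDiag_insert hi.2)]

lemma card_addRows (l : YoungDiagram) : (addRows l).card = (remRows l).card + 1 := by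
  have key : addRows l = insert 0 ((remRows l).image (· + 1)) := by
    ext i
    simp only [addRows, remRows, Finset.mem_insert, Finset.mem_image,
      Finset.mem_filter, Finset.mem_range]
    constructor
    · rintro ⟨hir, h0 | hcor⟩
      · exact Or.inl h0
      · rcases Nat.eq_zero_or_pos i with h | h
        · exact Or.inl h
        · right
          refine ⟨i - 1, ⟨?_, by rwa [Nat.sub_add_cancel h]⟩, by omega⟩
          have : (0 : ℕ) < l.rowLen (i - 1) := by omega
          have : ((i - 1, 0) : ℕ × ℕ) ∈ l := YoungDiagram.mem_iff_lt_rowLen.mpr this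
          exact YoungDiagram.mem_iff_lt_colLen.mp this
    · rintro (rfl | ⟨j, ⟨hj, hcor⟩, rfl⟩)
      · exact ⟨by omega, Or.inl rfl⟩
      · exact ⟨by omega, Or.inr (by simpa using hcor)⟩
  rw [key, Finset.card_insert_of_notMem (by simp),
    Finset.card_image_of_injective _ (add_left_injective 1)]

attribute [local instance] Classical.propDecidable

lemma offdiag (l k : YoungDiagram) (hne : k ≠ l) :
    ((upFinset l).filter (fun n => YDCovers k n)).card
      = ((downFinset l).filter (fun m => YDCovers m k)).card := by
  set A := (upFinset l).filter (fun n => YDCovers k n) with hA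
  set B := (downFinset l).filter (fun m => YDCovers m k) with hB
  have hknel : k.cells ≠ l.cells := fun h => hne (YoungDiagram.ext h)
  have hAspec : ∀ n ∈ A, n.cells = l.cells ∪ k.cells ∧
      n.cells.card = l.cells.card + 1 ∧ k.cells.card = l.cells.card := by
    intro n hn
    rw [hA, Finset.mem_filter, mem_upFinset] at hn
    obtain ⟨⟨hln, hcardl⟩, hkn, hcardk⟩ := hn
    have hkc : k.cells.card = l.cells.card := by omega
    have hsub : l.cells ∪ k.cells ⊆ n.cells := Finset.union_subset hln hkn
    have hne2 : ¬ k.cells ⊆ l.cells := by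
      intro h
      exact hknel (Finset.eq_of_subset_of_card_le h (by omega))
    have hssub : l.cells ⊂ l.cells ∪ k.cells := by
      rw [Finset.ssubset_iff_subset_ne]
      refine ⟨Finset.subset_union_left, fun h => hne2 (h ▸ Finset.subset_union_right)⟩
    have hlt : l.cells.card < (l.cells ∪ k.cells).card := Finset.card_lt_card hssub
    have hle : (l.cells ∪ k.cells).card ≤ n.cells.card := Finset.card_le_card hsub
    have : n.cells = l.cells ∪ k.cells :=
      (Finset.eq_of_subset_of_card_le hsub (by omega)).symm
    exact ⟨this, hcardl, hkc⟩
  have hBspec : ∀ m ∈ B, m.cells = l.cells ∩ k.cells ∧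
      l.cells.card = m.cells.card + 1 ∧ k.cells.card = l.cells.card := by
    intro m hm
    rw [hB, Finset.mem_filter, mem_downFinset] at hm
    obtain ⟨⟨hml, hcardl⟩, hmk, hcardk⟩ := hm
    have hkc : k.cells.card = l.cells.card := by omega
    have hsub : m.cells ⊆ l.cells ∩ k.cells := Finset.subset_inter hml hmk
    have hne2 : ¬ l.cells ⊆ k.cells := by
      intro h
      exact hknel (Finset.eq_of_subset_of_card_le h (by omega)).symm
    have hssub : l.cells ∩ k.cells ⊂ l.cells := by
      rw [Finset.ssubset_iff_subset_ne]
      refine ⟨Finset.inter_subset_left, fun h => hne2 ?_⟩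
      rw [← h]
      exact Finset.inter_subset_right
    have hlt : (l.cells ∩ k.cells).card < l.cells.card := Finset.card_lt_card hssub
    have hle : m.cells.card ≤ (l.cells ∩ k.cells).card := Finset.card_le_card hsub
    have : m.cells = l.cells ∩ k.cells :=
      Finset.eq_of_subset_of_card_le hsub (by omega)
    exact ⟨this, by omega, hkc⟩
  have hcards : (l.cells ∪ k.cells).card + (l.cells ∩ k.cells).card
      = l.cells.card + k.cells.card := Finset.card_union_add_card_inter _ _
  have hiff : A.Nonempty ↔ B.Nonempty := by
    constructor
    · rintro ⟨n, hn⟩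
      obtain ⟨hcells, hcard, hkc⟩ := hAspec n hn
      have hinter : (l.cells ∩ k.cells).card + 1 = l.cells.card := by
        rw [← hcells] at hcards
        omega
      refine ⟨l ⊓ k, ?_⟩
      rw [hB, Finset.mem_filter, mem_downFinset]
      refine ⟨⟨?_, ?_⟩, ?_, ?_⟩ <;>
        simp only [YoungDiagram.cells_inf]
      · exact Finset.inter_subset_left
      · omega
      · exact Finset.inter_subset_right
      · omega
    · rintro ⟨m, hm⟩
      obtain ⟨hcells, hcard, hkc⟩ := hBspec m hm
      have hunion : (l.cells ∪ k.cells).card = l.cells.card + 1 := by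
        rw [← hcells] at hcards
        omega
      refine ⟨l ⊔ k, ?_⟩
      rw [hA, Finset.mem_filter, mem_upFinset]
      refine ⟨⟨?_, ?_⟩, ?_, ?_⟩ <;>
        simp only [YoungDiagram.cells_sup]
      · exact Finset.subset_union_left
      · omega
      · exact Finset.subset_union_right
      · omega
  have hAcard : A.card ≤ 1 := by
    rw [Finset.card_le_one]
    intro a ha b hb
    apply YoungDiagram.ext
    rw [(hAspec a ha).1, (hAspec b hb).1]
  have hBcard : B.card ≤ 1 := by
    rw [Finset.card_le_one]
    intro a ha b hb
    apply YoungDiagram.ext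
    rw [(hBspec a ha).1, (hBspec b hb).1]
  rcases A.eq_empty_or_nonempty with hAe | hAne
  · have : ¬ B.Nonempty := fun h => by
      rw [← hiff] at h
      exact Finset.not_nonempty_empty (hAe ▸ h)
    rw [Finset.not_nonempty_iff_eq_empty] at this
    rw [hAe, this]
  · have hBne := hiff.mp hAne
    have h1 : 1 ≤ A.card := Finset.card_pos.mpr hAne
    have h2 : 1 ≤ B.card := Finset.card_pos.mpr hBne
    omega

lemma key_count (l k : YoungDiagram) :
    ((upFinset l).filter (fun n => YDCovers k n)).card
      = ((downFinset l).filter (fun m => YDCovers m k)).card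
        + (if k = l then 1 else 0) := by
  rcases eq_or_ne k l with rfl | hne
  · rw [if_pos rfl]
    have hA : (upFinset k).filter (fun n => YDCovers k n) = upFinset k :=
      Finset.filter_true_of_mem (fun n hn => mem_upFinset.mp hn)
    have hB : (downFinset k).filter (fun m => YDCovers m k) = downFinset k :=
      Finset.filter_true_of_mem (fun m hm => mem_downFinset.mp hm)
    rw [hA, hB, card_upFinset, card_downFinset, card_addRows]
  · rw [if_neg hne, Nat.add_zero]
    exact offdiag l k hne

lemma Uop_single (l : YoungDiagram) :
    Uop (Finsupp.single l (1 : ℚ)) = ∑ n ∈ upFinset l, Finsupp.single n (1 : ℚ) := by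
  simp [Uop]

lemma Dop_single (l : YoungDiagram) :
    Dop (Finsupp.single l (1 : ℚ)) = ∑ m ∈ downFinset l, Finsupp.single m (1 : ℚ) := by
  simp [Dop]

/-- `DU - UD = I` on ℚ𝕐. -/
theorem up_down_commutator : Dop * Uop - Uop * Dop = 1 := by
  apply LinearMap.ext
  intro x
  induction x using Finsupp.induction_linear with
  | zero => simp
  | add f g hf hg =>
      rw [map_add, hf, hg, map_add]
  | single l c =>
      have hc : Finsupp.single l c = c • Finsupp.single l (1 : ℚ) := by
        rw [Finsupp.smul_single, smul_eq_mul, mul_one]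
      rw [hc, map_smul, map_smul]
      congr 1
      have hDU : (Dop * Uop) (Finsupp.single l (1 : ℚ))
          = ∑ n ∈ upFinset l, ∑ m ∈ downFinset n, Finsupp.single m (1 : ℚ) := by
        rw [Module.End.mul_apply, Uop_single, map_sum]
        exact Finset.sum_congr rfl fun n _ => Dop_single n
      have hUD : (Uop * Dop) (Finsupp.single l (1 : ℚ))
          = ∑ m ∈ downFinset l, ∑ n ∈ upFinset m, Finsupp.single n (1 : ℚ) := by
        rw [Module.End.mul_apply, Dop_single, map_sum]
        exact Finset.sum_congr rfl fun m _ => Uop_single m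
      rw [LinearMap.sub_apply, hDU, hUD, Module.End.one_apply]
      ext k
      simp only [Finsupp.sub_apply, Finsupp.finset_sum_apply, Finsupp.single_apply]
      have e1 : ∀ n : YoungDiagram,
          (∑ m ∈ downFinset n, if m = k then (1 : ℚ) else 0)
            = if k ∈ downFinset n then 1 else 0 := by
        intro n
        rw [Finset.sum_ite_eq' (downFinset n) k (fun _ => (1 : ℚ))]
      have e2 : ∀ m : YoungDiagram,
          (∑ n ∈ upFinset m, if n = k then (1 : ℚ) else 0)
            = if k ∈ upFinset m then 1 else 0 := by
        intro m
        rw [Finset.sum_ite_eq' (upFinset m) k (fun _ => (1 : ℚ))]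
      rw [Finset.sum_congr rfl (fun n _ => e1 n),
        Finset.sum_congr rfl (fun m _ => e2 m), Finset.sum_boole, Finset.sum_boole]
      have h1 : (upFinset l).filter (fun n => k ∈ downFinset n)
          = (upFinset l).filter (fun n => YDCovers k n) := by
        apply Finset.filter_congr
        intro n _
        simp [mem_downFinset]
      have h2 : (downFinset l).filter (fun m => k ∈ upFinset m)
          = (downFinset l).filter (fun m => YDCovers m k) := by
        apply Finset.filter_congr
        intro m _
        simp [mem_upFinset]
      rw [h1, h2, key_count l k]
      push_cast
      rcases eq_or_ne k l with rfl | hne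
      · simp
      · simp [hne, Ne.symm hne]
end

section
/- For distinct partitions λ ≠ ρ, the sets 𝒰(λ)∩𝒰(ρ) and 𝒟(λ)∩𝒟(ρ) have the same cardinality; more precisely, either both equal {λ∪ρ} and {λ∩ρ} respectively (each of size 1), or both are empty. -/
/-- for `λ ≠ ρ`, either `𝒰(λ)∩𝒰(ρ) = {λ⊔ρ}` and `𝒟(λ)∩𝒟(ρ) = {λ⊓ρ}`,
or both intersections are empty. -/
theorem up_down_intersections (l r : YoungDiagram) (hne : l ≠ r) :
    ({n : YoungDiagram | YDCovers l n ∧ YDCovers r n} = {l ⊔ r} ∧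
      {m : YoungDiagram | YDCovers m l ∧ YDCovers m r} = {l ⊓ r}) ∨
    ({n : YoungDiagram | YDCovers l n ∧ YDCovers r n} = ∅ ∧
      {m : YoungDiagram | YDCovers m l ∧ YDCovers m r} = ∅) := by
  classical
  -- key cardinality condition
  set C : Prop := l.cells.card = r.cells.card ∧ (l ⊔ r).cells.card = l.cells.card + 1 with hCdef
  have hincexc : (l ⊔ r).cells.card + (l ⊓ r).cells.card = l.cells.card + r.cells.card := by
    rw [YoungDiagram.cells_sup, YoungDiagram.cells_inf]
    exact Finset.card_union_add_card_inter _ _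
  have hsubl : (l ⊓ r).cells ⊆ l.cells := by
    rw [YoungDiagram.cells_inf]; exact Finset.inter_subset_left
  have hsubr : (l ⊓ r).cells ⊆ r.cells := by
    rw [YoungDiagram.cells_inf]; exact Finset.inter_subset_right
  have hlsup : l.cells ⊆ (l ⊔ r).cells := by
    rw [YoungDiagram.cells_sup]; exact Finset.subset_union_left
  have hrsup : r.cells ⊆ (l ⊔ r).cells := by
    rw [YoungDiagram.cells_sup]; exact Finset.subset_union_right
  -- Claim 1
  have claim1 : ∀ n, YDCovers l n ∧ YDCovers r n → n = l ⊔ r ∧ C := by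
    rintro n ⟨⟨hln, hcn⟩, ⟨hrn, hcn'⟩⟩
    have hcard : l.cells.card = r.cells.card := by omega
    have hsub : (l ⊔ r).cells ⊆ n.cells := by
      rw [YoungDiagram.cells_sup]; exact Finset.union_subset hln hrn
    have hne' : l.cells ≠ (l ⊔ r).cells := by
      intro h
      apply hne
      have : r.cells ⊆ l.cells := by
        rw [h, YoungDiagram.cells_sup]; exact Finset.subset_union_right
      exact YoungDiagram.ext (Finset.eq_of_subset_of_card_le this (le_of_eq hcard)).symm
    have hlt : l.cells.card < (l ⊔ r).cells.card :=
      Finset.card_lt_card (lt_of_le_of_ne hlsup hne')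
    have hle : (l ⊔ r).cells.card ≤ n.cells.card := Finset.card_le_card hsub
    have hcardeq : (l ⊔ r).cells.card = n.cells.card := by omega
    have : (l ⊔ r).cells = n.cells := Finset.eq_of_subset_of_card_le hsub (le_of_eq hcardeq.symm)
    exact ⟨(YoungDiagram.ext this).symm, hcard, by omega⟩
  -- Claim 2
  have claim2 : ∀ m, YDCovers m l ∧ YDCovers m r → m = l ⊓ r ∧ C := by
    rintro m ⟨⟨hml, hcl⟩, ⟨hmr, hcr⟩⟩
    have hcard : l.cells.card = r.cells.card := by omega
    have hsub : m.cells ⊆ (l ⊓ r).cells := by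
      rw [YoungDiagram.cells_inf]; exact Finset.subset_inter hml hmr
    have hne' : (l ⊓ r).cells ≠ l.cells := by
      intro h
      apply hne
      have : l.cells ⊆ r.cells := by
        rw [← h, YoungDiagram.cells_inf]; exact Finset.inter_subset_right
      exact YoungDiagram.ext (Finset.eq_of_subset_of_card_le this (le_of_eq hcard.symm))
    have hlt : (l ⊓ r).cells.card < l.cells.card :=
      Finset.card_lt_card (lt_of_le_of_ne hsubl hne')
    have hge : m.cells.card ≤ (l ⊓ r).cells.card := Finset.card_le_card hsub
    have hcardeq : m.cells.card = (l ⊓ r).cells.card := by omega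
    have : m.cells = (l ⊓ r).cells := Finset.eq_of_subset_of_card_le hsub (le_of_eq hcardeq.symm)
    exact ⟨YoungDiagram.ext this, hcard, by omega⟩
  by_cases hC : C
  · left
    obtain ⟨hcard, hsupcard⟩ := hC
    constructor
    · ext n
      simp only [Set.mem_setOf_eq, Set.mem_singleton_iff]
      constructor
      · intro h; exact (claim1 n h).1
      · rintro rfl
        exact ⟨⟨hlsup, hsupcard⟩, ⟨hrsup, by omega⟩⟩
    · ext m
      simp only [Set.mem_setOf_eq, Set.mem_singleton_iff]
      constructor
      · intro h; exact (claim2 m h).1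
      · rintro rfl
        exact ⟨⟨hsubl, by omega⟩, ⟨hsubr, by omega⟩⟩
  · right
    constructor
    · ext n
      simp only [Set.mem_setOf_eq, Set.mem_empty_iff_false, iff_false]
      intro h; exact hC (claim1 n h).2
    · ext m
      simp only [Set.mem_setOf_eq, Set.mem_empty_iff_false, iff_false]
      intro h; exact hC (claim2 m h).2
end

section
/- For every partition λ, Σ_{ν∈𝒰(λ)} H_λ/H_ν = 1, where H_κ = Π_{c∈κ} h_κ(c) is the product of all hook-lengths of κ. -/
open Finset Polynomial in
lemma HookAux.coeff_top_interpolate {ι : Type*} [DecidableEq ι] (s : Finset ι) (v : ι → ℚ)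
    (hvs : Set.InjOn v s) (f : ℚ[X]) (hd : f.degree < s.card) :
    f.coeff (s.card - 1) = ∑ i ∈ s, f.eval (v i) * Lagrange.nodalWeight s v i := by
  conv_lhs => rw [Lagrange.eq_interpolate hvs hd]
  rw [Lagrange.interpolate_apply, finset_sum_coeff]
  refine Finset.sum_congr rfl fun i hi => ?_
  have hb : Lagrange.basis s v i =
      C (Lagrange.nodalWeight s v i) * Lagrange.nodal (s.erase i) v := by
    rw [Lagrange.basis_eq_prod_sub_inv_mul_nodal_div hi, Lagrange.nodal_erase_eq_nodal_div hi]
  have hm : (Lagrange.nodal (s.erase i) v).Monic := Lagrange.nodal_monic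
  have hdeg : (Lagrange.nodal (s.erase i) v).natDegree = s.card - 1 := by
    rw [Lagrange.natDegree_nodal, Finset.card_erase_of_mem hi]
  have hc : (Lagrange.nodal (s.erase i) v).coeff (s.card - 1) = 1 := by
    rw [← hdeg]; exact hm.coeff_natDegree
  rw [hb]
  simp only [coeff_C_mul]
  rw [hc]
  ring

open Finset Polynomial in
lemma HookAux.claimA (R : ℕ) (hR : 0 < R) (x : ℕ → ℚ) (hinj : Set.InjOn x (range R))
    (h0 : x (R - 1) = 0) (hne : ∀ i ∈ range R, x i + 1 ≠ 0) :
    ∑ r ∈ range R, (∏ i ∈ range R, (x r - x i + 1)) /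
      ((x r + 1) * ∏ i ∈ (range R).erase r, (x r - x i)) = 1 := by
  classical
  have hmem : R - 1 ∈ range R := by simp [Nat.sub_lt hR one_pos]
  set f : ℚ[X] := ∏ i ∈ (range R).erase (R - 1), (X - C (x i - 1)) with hf
  have hmon : f.Monic := monic_prod_of_monic _ _ fun i _ => monic_X_sub_C _
  have hnd : f.natDegree = R - 1 := by
    rw [hf, natDegree_prod_of_monic _ _ fun i _ => monic_X_sub_C _,
      Finset.sum_congr rfl fun i _ => natDegree_X_sub_C (x i - 1), Finset.sum_const,
      smul_eq_mul, mul_one, Finset.card_erase_of_mem hmem, Finset.card_range]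
  have hdeg : f.degree < ((range R).card : WithBot ℕ) := by
    refine lt_of_le_of_lt f.degree_le_natDegree ?_
    rw [hnd, Finset.card_range]
    exact_mod_cast Nat.sub_lt hR one_pos
  have hcoeff : f.coeff ((range R).card - 1) = 1 := by
    rw [Finset.card_range, ← hnd]; exact hmon.coeff_natDegree
  have key := HookAux.coeff_top_interpolate (range R) x hinj f hdeg
  rw [hcoeff] at key
  conv_rhs => rw [key]
  refine Finset.sum_congr rfl fun r hr => ?_
  have heval : f.eval (x r) = ∏ i ∈ (range R).erase (R - 1), (x r - x i + 1) := by
    rw [hf, eval_prod]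
    exact Finset.prod_congr rfl fun i _ => by rw [eval_sub, eval_X, eval_C]; ring
  have hN : ∏ i ∈ range R, (x r - x i + 1) = (x r + 1) * f.eval (x r) := by
    rw [heval, ← Finset.mul_prod_erase (range R) (fun i => x r - x i + 1) hmem, h0]
    norm_num
  have hweights : Lagrange.nodalWeight (range R) x r =
      (∏ i ∈ (range R).erase r, (x r - x i))⁻¹ := by
    rw [Lagrange.nodalWeight, ← Finset.prod_inv_distrib]
  rw [hN, hweights]
  rw [mul_comm (x r + 1) _, mul_div_assoc, div_mul_eq_div_div, div_self (hne r hr), one_div]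

namespace HookAux

open Finset Nat

/-- shifted row lengths -/
def LL (l : YoungDiagram) (R i : ℕ) : ℕ := l.rowLen i + (R - 1 - i)

def gg (l : YoungDiagram) (R j : ℕ) : ℕ := R + j - l.colLen j

lemma colLen_le_R {l : YoungDiagram} {R : ℕ} (hR : l.colLen 0 ≤ R) (j : ℕ) :
    l.colLen j ≤ R := le_trans (l.colLen_anti 0 j (Nat.zero_le _)) hR

lemma hook_add {l : YoungDiagram} {R i j : ℕ} (hR : l.colLen 0 ≤ R)
    (hij : (i, j) ∈ l) : hookLen l (i, j) + gg l R j = LL l R i := by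
  have h1 : j < l.rowLen i := YoungDiagram.mem_iff_lt_rowLen.mp hij
  have h2 : i < l.colLen j := YoungDiagram.mem_iff_lt_colLen.mp hij
  have h3 : l.colLen j ≤ R := colLen_le_R hR j
  unfold hookLen armLen legLen LL gg
  simp only
  omega

lemma LL_lt {l : YoungDiagram} {R i k : ℕ} (hik : i < k) (hk : k < R) :
    LL l R k < LL l R i := by
  have := l.rowLen_anti i k (le_of_lt hik)
  unfold LL; omega

lemma gg_mono {l : YoungDiagram} {R j1 j2 : ℕ} (hR : l.colLen 0 ≤ R) (h : j1 < j2) :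
    gg l R j1 < gg l R j2 := by
  have h1 := l.colLen_anti j1 j2 (le_of_lt h)
  have h2 : l.colLen j1 ≤ R := colLen_le_R hR j1
  unfold gg; omega

lemma gg_ne_LL {l : YoungDiagram} {R i j k : ℕ} (hR : l.colLen 0 ≤ R)
    (hij : (i, j) ∈ l) (hik : i < k) (hk : k < R) : gg l R j ≠ LL l R k := by
  have hcR : l.colLen j ≤ R := colLen_le_R hR j
  by_cases hc : (k, j) ∈ l
  · have h1 : j < l.rowLen k := YoungDiagram.mem_iff_lt_rowLen.mp hc
    have h2 : k < l.colLen j := YoungDiagram.mem_iff_lt_colLen.mp hc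
    unfold gg LL; omega
  · have h1 : l.rowLen k ≤ j := by
      by_contra h
      exact hc (YoungDiagram.mem_iff_lt_rowLen.mpr (by omega))
    have h2 : l.colLen j ≤ k := by
      by_contra h
      exact hc (YoungDiagram.mem_iff_lt_colLen.mpr (by omega))
    unfold gg LL; omega

lemma gg_lt_LL {l : YoungDiagram} {R i j : ℕ} (hR : l.colLen 0 ≤ R)
    (hij : (i, j) ∈ l) : gg l R j < LL l R i := by
  have := hook_add (i := i) (j := j) hR hij
  unfold hookLen at this; omega

lemma prod_range_sub_self (n : ℕ) : (∏ v ∈ range n, (n - v)) = n ! := by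
  rw [← Finset.prod_range_reflect (fun v => n - v) n]
  have h : ∀ j ∈ range n, n - (n - 1 - j) = j + 1 := fun j hj => by
    rw [Finset.mem_range] at hj; omega
  rw [Finset.prod_congr rfl h, Finset.prod_range_add_one_eq_factorial]

lemma gg_injOn {l : YoungDiagram} {R : ℕ} (hR : l.colLen 0 ≤ R) (s : Finset ℕ) :
    ∀ a ∈ s, ∀ b ∈ s, gg l R a = gg l R b → a = b := by
  intro a _ b _ hab
  rcases Nat.lt_trichotomy a b with h | h | h
  · exact absurd hab (Nat.ne_of_lt (gg_mono hR h))
  · exact h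
  · exact absurd hab.symm (Nat.ne_of_lt (gg_mono hR h))

lemma LL_injOn {l : YoungDiagram} {R i : ℕ} :
    ∀ a ∈ Ioo i R, ∀ b ∈ Ioo i R, LL l R a = LL l R b → a = b := by
  intro a ha b hb hab
  rw [Finset.mem_Ioo] at ha hb
  rcases Nat.lt_trichotomy a b with h | h | h
  · exact absurd hab.symm (Nat.ne_of_lt (LL_lt h hb.2))
  · exact h
  · exact absurd hab (Nat.ne_of_lt (LL_lt h ha.2))

lemma row_prod {l : YoungDiagram} {R i : ℕ} (hR : l.colLen 0 ≤ R) (hi : i < R) :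
    (∏ j ∈ range (l.rowLen i), hookLen l (i, j)) *
      (∏ k ∈ Ioo i R, (LL l R i - LL l R k)) = (LL l R i)! := by
  classical
  have hmemrow : ∀ j ∈ range (l.rowLen i), (i, j) ∈ l := fun j hj =>
    YoungDiagram.mem_iff_lt_rowLen.mpr (Finset.mem_range.mp hj)
  set S1 := (range (l.rowLen i)).image (gg l R) with hS1
  set S2 := (Ioo i R).image (LL l R) with hS2
  have hdisj : Disjoint S1 S2 := by
    rw [Finset.disjoint_left]
    rintro v hv1 hv2
    obtain ⟨j, hj, rfl⟩ := Finset.mem_image.mp hv1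
    obtain ⟨k, hk, hkk⟩ := Finset.mem_image.mp hv2
    rw [Finset.mem_Ioo] at hk
    exact gg_ne_LL hR (hmemrow j hj) hk.1 hk.2 hkk.symm
  have hsub : S1 ∪ S2 ⊆ range (LL l R i) := by
    intro v hv
    rw [Finset.mem_union] at hv
    rcases hv with hv | hv
    · obtain ⟨j, hj, rfl⟩ := Finset.mem_image.mp hv
      exact Finset.mem_range.mpr (gg_lt_LL hR (hmemrow j hj))
    · obtain ⟨k, hk, rfl⟩ := Finset.mem_image.mp hv
      rw [Finset.mem_Ioo] at hk
      exact Finset.mem_range.mpr (LL_lt hk.1 hk.2)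
  have hcard : (range (LL l R i)).card ≤ (S1 ∪ S2).card := by
    rw [Finset.card_union_of_disjoint hdisj, hS1, hS2,
      Finset.card_image_of_injOn (gg_injOn hR _), Finset.card_image_of_injOn LL_injOn,
      Finset.card_range, Finset.card_range, Nat.card_Ioo]
    unfold LL; omega
  have hset : S1 ∪ S2 = range (LL l R i) := Finset.eq_of_subset_of_card_le hsub hcard
  have hfact := prod_range_sub_self (LL l R i)
  rw [← hset, Finset.prod_union hdisj, hS1, hS2,
    Finset.prod_image (gg_injOn hR _), Finset.prod_image LL_injOn] at hfact
  rw [← hfact]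
  congr 1
  refine Finset.prod_congr rfl fun j hj => ?_
  have h := hook_add hR (hmemrow j hj)
  omega

lemma cells_eq {l : YoungDiagram} {R : ℕ} (hR : l.colLen 0 ≤ R) :
    l.cells = (range R).biUnion (fun i => ({i} : Finset ℕ) ×ˢ range (l.rowLen i)) := by
  ext ⟨a, b⟩
  simp only [Finset.mem_biUnion, Finset.mem_product, Finset.mem_singleton, Finset.mem_range,
    YoungDiagram.mem_cells]
  constructor
  · intro h
    refine ⟨a, ?_, rfl, YoungDiagram.mem_iff_lt_rowLen.mp h⟩
    have h0 : (a, 0) ∈ l := l.up_left_mem le_rfl (Nat.zero_le _) h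
    have := YoungDiagram.mem_iff_lt_colLen.mp h0
    omega
  · rintro ⟨i, _, rfl, hb⟩
    exact YoungDiagram.mem_iff_lt_rowLen.mpr hb

lemma Hprod_eq {l : YoungDiagram} {R : ℕ} (hR : l.colLen 0 ≤ R) :
    Hprod l = ∏ i ∈ range R, ∏ j ∈ range (l.rowLen i), hookLen l (i, j) := by
  rw [Hprod, cells_eq hR, Finset.prod_biUnion]
  · refine Finset.prod_congr rfl fun i _ => ?_
    rw [Finset.prod_product]
    simp
  · intro i _ j _ hij
    rw [Function.onFun, Finset.disjoint_left]
    rintro ⟨a, b⟩ h1 h2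
    simp only [Finset.mem_product, Finset.mem_singleton] at h1 h2
    exact hij (h1.1.symm.trans h2.1)

lemma key_nat {l : YoungDiagram} {R : ℕ} (hR : l.colLen 0 ≤ R) :
    Hprod l * (∏ i ∈ range R, ∏ k ∈ Ioo i R, (LL l R i - LL l R k)) =
      ∏ i ∈ range R, (LL l R i)! := by
  rw [Hprod_eq hR, ← Finset.prod_mul_distrib]
  exact Finset.prod_congr rfl fun i hi => row_prod hR (Finset.mem_range.mp hi)

lemma key_rat {l : YoungDiagram} {R : ℕ} (hR : l.colLen 0 ≤ R) :
    (Hprod l : ℚ) * (∏ i ∈ range R, ∏ k ∈ Ioo i R, ((LL l R i : ℚ) - (LL l R k : ℚ))) =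
      ∏ i ∈ range R, ((LL l R i)! : ℚ) := by
  have h := key_nat hR
  have hcast : ((Hprod l * (∏ i ∈ range R, ∏ k ∈ Ioo i R, (LL l R i - LL l R k)) : ℕ) : ℚ)
      = ((∏ i ∈ range R, (LL l R i)! : ℕ) : ℚ) := congrArg _ h
  push_cast at hcast
  rw [← hcast]
  push_cast
  refine congrArg _ (Finset.prod_congr rfl fun i _ => Finset.prod_congr rfl fun k hk => ?_)
  rw [Finset.mem_Ioo] at hk
  have : LL l R k ≤ LL l R i := le_of_lt (LL_lt hk.1 hk.2)
  push_cast [Nat.cast_sub this]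
  ring

def Addable (l : YoungDiagram) (r : ℕ) : Prop := r = 0 ∨ l.rowLen r < l.rowLen (r - 1)

instance (l : YoungDiagram) (r : ℕ) : Decidable (Addable l r) := by
  unfold Addable; infer_instance

lemma notMem_corner (l : YoungDiagram) (r : ℕ) : (r, l.rowLen r) ∉ l := fun h =>
  lt_irrefl _ (YoungDiagram.mem_iff_lt_rowLen.mp h)

lemma addBox_lower (l : YoungDiagram) (r : ℕ) (h : Addable l r) :
    IsLowerSet (↑(insert (r, l.rowLen r) l.cells) : Set (ℕ × ℕ)) := by
  intro p q hle hp
  simp only [Finset.coe_insert, Set.mem_insert_iff, Finset.mem_coe,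
    YoungDiagram.mem_cells] at hp ⊢
  rcases hp with hp | hp
  · subst hp
    obtain ⟨i, j⟩ := q
    rw [Prod.mk_le_mk] at hle
    rcases Nat.lt_or_ge j (l.rowLen r) with hj | hj
    · exact Or.inr (YoungDiagram.mem_iff_lt_rowLen.mpr
        (lt_of_lt_of_le hj (l.rowLen_anti _ _ hle.1)))
    · have hj' : j = l.rowLen r := le_antisymm hle.2 hj
      subst hj'
      rcases Nat.eq_or_lt_of_le hle.1 with hi | hi
      · exact Or.inl (by rw [hi])
      · rcases h with h0 | h0
        · exact absurd h0 (by omega)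
        · exact Or.inr (YoungDiagram.mem_iff_lt_rowLen.mpr
            (lt_of_lt_of_le h0 (l.rowLen_anti _ _ (by omega))))
  · exact Or.inr (l.isLowerSet hle hp)

def addBox (l : YoungDiagram) (r : ℕ) : YoungDiagram :=
  if h : Addable l r then ⟨insert (r, l.rowLen r) l.cells, addBox_lower l r h⟩ else l

lemma addBox_cells {l : YoungDiagram} {r : ℕ} (h : Addable l r) :
    (addBox l r).cells = insert (r, l.rowLen r) l.cells := by
  rw [addBox, dif_pos h]

lemma mem_addBox {l : YoungDiagram} {r : ℕ} (h : Addable l r) (p : ℕ × ℕ) :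
    p ∈ addBox l r ↔ p = (r, l.rowLen r) ∨ p ∈ l := by
  rw [← YoungDiagram.mem_cells, addBox_cells h, Finset.mem_insert, YoungDiagram.mem_cells]

lemma rowLen_eq_of {n : YoungDiagram} {i m : ℕ} (h : ∀ j, (i, j) ∈ n ↔ j < m) :
    n.rowLen i = m := by
  rcases Nat.lt_trichotomy (n.rowLen i) m with hl | he | hg
  · have := YoungDiagram.mem_iff_lt_rowLen.mp ((h (n.rowLen i)).mpr hl)
    omega
  · exact he
  · have := (h m).mp (YoungDiagram.mem_iff_lt_rowLen.mpr hg)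
    omega

lemma rowLen_addBox {l : YoungDiagram} {r : ℕ} (h : Addable l r) (i : ℕ) :
    (addBox l r).rowLen i = if i = r then l.rowLen i + 1 else l.rowLen i := by
  apply rowLen_eq_of
  intro j
  rw [mem_addBox h]
  by_cases hir : i = r
  · subst hir
    rw [if_pos rfl]
    constructor
    · rintro (hp | hp)
      · rw [Prod.mk.injEq] at hp; omega
      · have := YoungDiagram.mem_iff_lt_rowLen.mp hp; omega
    · intro hj
      rcases Nat.lt_or_ge j (l.rowLen i) with h' | h'
      · exact Or.inr (YoungDiagram.mem_iff_lt_rowLen.mpr h')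
      · exact Or.inl (by rw [Prod.mk.injEq]; omega)
  · rw [if_neg hir]
    constructor
    · rintro (hp | hp)
      · rw [Prod.mk.injEq] at hp; exact absurd hp.1 hir
      · exact YoungDiagram.mem_iff_lt_rowLen.mp hp
    · intro hj
      exact Or.inr (YoungDiagram.mem_iff_lt_rowLen.mpr hj)

lemma addable_le {l : YoungDiagram} {r : ℕ} (h : Addable l r) : r ≤ l.colLen 0 := by
  rcases h with h | h
  · omega
  · have h1 : (r - 1, 0) ∈ l := YoungDiagram.mem_iff_lt_rowLen.mpr (by omega)
    have := YoungDiagram.mem_iff_lt_colLen.mp h1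
    omega

lemma colLen0_addBox {l : YoungDiagram} {r : ℕ} (h : Addable l r) :
    (addBox l r).colLen 0 ≤ l.colLen 0 + 1 := by
  by_contra hc
  push_neg at hc
  have h1 : (l.colLen 0 + 1, 0) ∈ addBox l r := YoungDiagram.mem_iff_lt_colLen.mpr hc
  rw [mem_addBox h] at h1
  rcases h1 with h1 | h1
  · rw [Prod.mk.injEq] at h1
    have := addable_le h
    omega
  · have := YoungDiagram.mem_iff_lt_colLen.mp h1
    omega

lemma covers_addBox {l : YoungDiagram} {r : ℕ} (h : Addable l r) :
    YDCovers l (addBox l r) := by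
  constructor
  · rw [addBox_cells h]; exact Finset.subset_insert _ _
  · rw [addBox_cells h, Finset.card_insert_of_notMem (fun hc => notMem_corner l r hc)]

lemma cover_eq_addBox {l n : YoungDiagram} (hc : YDCovers l n) :
    ∃ r, Addable l r ∧ n = addBox l r := by
  obtain ⟨hsub, hcard⟩ := hc
  have hd : (n.cells \ l.cells).card = 1 := by rw [Finset.card_sdiff_of_subset hsub]; omega
  obtain ⟨b, hb⟩ := Finset.card_eq_one.mp hd
  have hbmem : b ∈ n.cells \ l.cells := hb ▸ Finset.mem_singleton_self b
  have hby : n.cells = insert b l.cells := by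
    ext p
    constructor
    · intro hp
      by_cases hpl : p ∈ l.cells
      · exact Finset.mem_insert_of_mem hpl
      · have hps : p ∈ n.cells \ l.cells := Finset.mem_sdiff.mpr ⟨hp, hpl⟩
        rw [hb, Finset.mem_singleton] at hps
        rw [hps]; exact Finset.mem_insert_self _ _
    · intro hp
      rcases Finset.mem_insert.mp hp with hp | hp
      · exact hp ▸ (Finset.mem_sdiff.mp hbmem).1
      · exact hsub hp
  have hbnl : b ∉ l.cells := (Finset.mem_sdiff.mp hbmem).2
  obtain ⟨r, c⟩ := b
  have hbn : (r, c) ∈ n := (Finset.mem_sdiff.mp hbmem).1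
  have hle : l.rowLen r ≤ c := by
    by_contra hlt
    push_neg at hlt
    exact hbnl (YoungDiagram.mem_iff_lt_rowLen.mpr hlt)
  have hge : c ≤ l.rowLen r := by
    by_contra hgt
    push_neg at hgt
    have h1 : (r, l.rowLen r) ∈ n := n.up_left_mem le_rfl (le_of_lt hgt) hbn
    have h2 : (r, l.rowLen r) ∈ insert ((r : ℕ), c) l.cells := by
      rw [← hby]; exact h1
    rcases Finset.mem_insert.mp h2 with h3 | h3
    · rw [Prod.mk.injEq] at h3; omega
    · exact notMem_corner l r h3
  have hcr : c = l.rowLen r := le_antisymm hge hle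
  subst hcr
  have hadd : Addable l r := by
    rcases Nat.eq_zero_or_pos r with h0 | h0
    · exact Or.inl h0
    · refine Or.inr ?_
      have h1 : (r - 1, l.rowLen r) ∈ n := n.up_left_mem (by omega) le_rfl hbn
      have h2 : (r - 1, l.rowLen r) ∈ insert ((r : ℕ), l.rowLen r) l.cells := by
        rw [← hby]; exact h1
      rcases Finset.mem_insert.mp h2 with h3 | h3
      · rw [Prod.mk.injEq] at h3; omega
      · exact YoungDiagram.mem_iff_lt_rowLen.mp h3
  refine ⟨r, hadd, ?_⟩
  apply YoungDiagram.ext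
  rw [hby, addBox_cells hadd]

lemma addBox_inj {l : YoungDiagram} {r r' : ℕ} (h : Addable l r) (h' : Addable l r')
    (he : addBox l r = addBox l r') : r = r' := by
  by_contra hne
  have h1 := rowLen_addBox h r
  have h2 := rowLen_addBox h' r
  rw [he] at h1
  rw [h1, if_pos rfl, if_neg hne] at h2
  omega

lemma erase_eq_union {r R : ℕ} (hr : r < R) :
    (range R).erase r = range r ∪ Ioo r R := by
  ext a
  simp only [Finset.mem_erase, Finset.mem_range, Finset.mem_union, Finset.mem_Ioo]
  omega

lemma disj_range_Ioo {r R : ℕ} : Disjoint (range r) (Ioo r R) := by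
  rw [Finset.disjoint_left]
  intro a ha hb
  rw [Finset.mem_range] at ha
  rw [Finset.mem_Ioo] at hb
  omega

lemma range_eq_insert_union {r R : ℕ} (hr : r < R) :
    range R = insert r (range r ∪ Ioo r R) := by
  ext a
  simp only [Finset.mem_insert, Finset.mem_range, Finset.mem_union, Finset.mem_Ioo]
  omega

lemma prod_split {M : Type*} [CommMonoid M] {r R : ℕ} (hr : r < R) (f : ℕ → M) :
    ∏ i ∈ range R, f i = f r * ((∏ i ∈ range r, f i) * ∏ k ∈ Ioo r R, f k) := by
  rw [range_eq_insert_union hr, Finset.prod_insert (by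
    simp only [Finset.mem_union, Finset.mem_range, Finset.mem_Ioo]; omega),
    Finset.prod_union disj_range_Ioo]

lemma prod_erase_split {M : Type*} [CommMonoid M] {r R : ℕ} (hr : r < R) (f : ℕ → M) :
    ∏ i ∈ (range R).erase r, f i = (∏ i ∈ range r, f i) * ∏ k ∈ Ioo r R, f k := by
  rw [erase_eq_union hr, Finset.prod_union disj_range_Ioo]

end HookAux

namespace HookAux

open Finset Nat

lemma LL_ne {l : YoungDiagram} {R i k : ℕ} (hi : i < R) (hk : k < R) (hik : i ≠ k) :
    LL l R i ≠ LL l R k := by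
  rcases Nat.lt_trichotomy i k with h | h | h
  · exact (Nat.ne_of_lt (LL_lt h hk)).symm
  · exact absurd h hik
  · exact Nat.ne_of_lt (LL_lt h hi)

lemma ratio {l : YoungDiagram} {r R : ℕ} (h : Addable l r)
    (hR : l.colLen 0 + 1 ≤ R) (hrR : r < R) :
    (Hprod l : ℚ) / (Hprod (addBox l r) : ℚ) =
      (∏ i ∈ Finset.range R, ((LL l R r : ℚ) - (LL l R i : ℚ) + 1)) /
        (((LL l R r : ℚ) + 1) *
          ∏ i ∈ (Finset.range R).erase r, ((LL l R r : ℚ) - (LL l R i : ℚ))) := by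
  classical
  have hRl : l.colLen 0 ≤ R := by omega
  set n := addBox l r with hn
  have hRn : n.colLen 0 ≤ R := le_trans (colLen0_addBox h) hR
  have hrmem : r ∈ range R := Finset.mem_range.mpr hrR
  have hLn : ∀ i, LL n R i = if i = r then LL l R i + 1 else LL l R i := by
    intro i
    by_cases hir : i = r
    · rw [if_pos hir, LL, LL, hn, rowLen_addBox h i, if_pos hir]
      omega
    · rw [if_neg hir, LL, LL, hn, rowLen_addBox h i, if_neg hir]
  have keyl := key_rat (l := l) hRl
  have keyn := key_rat (l := n) hRn
  set Pl := ∏ i ∈ range R, ∏ k ∈ Ioo i R, ((LL l R i : ℚ) - (LL l R k : ℚ)) with hPl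
  set Pn := ∏ i ∈ range R, ∏ k ∈ Ioo i R, ((LL n R i : ℚ) - (LL n R k : ℚ)) with hPn
  set Fl := ∏ i ∈ range R, ((LL l R i)! : ℚ) with hFl
  set Fn := ∏ i ∈ range R, ((LL n R i)! : ℚ) with hFn
  set Nr := ∏ i ∈ Finset.range R, ((LL l R r : ℚ) - (LL l R i : ℚ) + 1) with hNr
  set Er := ∏ i ∈ (Finset.range R).erase r, ((LL l R r : ℚ) - (LL l R i : ℚ)) with hEr
  set Nr' := ∏ i ∈ (Finset.range R).erase r, ((LL l R r : ℚ) - (LL l R i : ℚ) + 1) with hNr'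
  -- nonvanishing
  have hsubne : ∀ (m : YoungDiagram), ∀ i ∈ range R, ∀ k ∈ Ioo i R,
      ((LL m R i : ℚ) - (LL m R k : ℚ)) ≠ 0 := by
    intro m i hi k hk
    rw [Finset.mem_range] at hi
    rw [Finset.mem_Ioo] at hk
    have := LL_ne (l := m) hi hk.2 (by omega)
    intro hc
    exact this (by exact_mod_cast sub_eq_zero.mp hc)
  have hPl0 : Pl ≠ 0 := Finset.prod_ne_zero_iff.mpr fun i hi =>
    Finset.prod_ne_zero_iff.mpr fun k hk => hsubne l i hi k hk
  have hPn0 : Pn ≠ 0 := Finset.prod_ne_zero_iff.mpr fun i hi =>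
    Finset.prod_ne_zero_iff.mpr fun k hk => hsubne n i hi k hk
  have hFl0 : Fl ≠ 0 := Finset.prod_ne_zero_iff.mpr fun i _ => by
    exact_mod_cast (Nat.factorial_pos _).ne'
  have hxr1 : ((LL l R r : ℚ) + 1) ≠ 0 := by positivity
  have hEr0 : Er ≠ 0 := Finset.prod_ne_zero_iff.mpr fun i hi => by
    obtain ⟨hir, hiR⟩ := Finset.mem_erase.mp hi
    rw [Finset.mem_range] at hiR
    have := LL_ne (l := l) hrR hiR (Ne.symm hir)
    intro hc
    exact this (by exact_mod_cast sub_eq_zero.mp hc)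
  -- Fn = (x r + 1) * Fl
  have hFneq : Fn = ((LL l R r : ℚ) + 1) * Fl := by
    rw [hFn, hFl, ← Finset.mul_prod_erase (range R) (fun i => ((LL n R i)! : ℚ)) hrmem,
      ← Finset.mul_prod_erase (range R) (fun i => ((LL l R i)! : ℚ)) hrmem,
      Finset.prod_congr rfl (fun i hi => by
        rw [hLn i, if_neg (Finset.mem_erase.mp hi).1] :
        ∀ i ∈ (range R).erase r, ((LL n R i)! : ℚ) = ((LL l R i)! : ℚ)),
      hLn r, if_pos rfl, Nat.factorial_succ]
    push_cast
    ring
  have hFn0 : Fn ≠ 0 := by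
    rw [hFneq]
    exact mul_ne_zero hxr1 hFl0
  have hHn0 : (Hprod n : ℚ) ≠ 0 := by
    intro h0
    rw [h0, zero_mul] at keyn
    exact hFn0 keyn.symm
  -- Nr = Nr'
  have hNrEq : Nr = Nr' := by
    rw [hNr, hNr', ← Finset.mul_prod_erase (Finset.range R)
      (fun i => ((LL l R r : ℚ) - (LL l R i : ℚ) + 1)) hrmem]
    simp
  -- the product identity G
  have per_i : ∀ i ∈ range r,
      (∏ k ∈ Ioo i R, ((LL n R i : ℚ) - (LL n R k : ℚ))) * ((LL l R r : ℚ) - (LL l R i : ℚ)) =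
      (∏ k ∈ Ioo i R, ((LL l R i : ℚ) - (LL l R k : ℚ))) *
        ((LL l R r : ℚ) - (LL l R i : ℚ) + 1) := by
    intro i hi
    rw [Finset.mem_range] at hi
    have hir : i ≠ r := by omega
    have hrIoo : r ∈ Ioo i R := Finset.mem_Ioo.mpr ⟨hi, hrR⟩
    rw [← Finset.mul_prod_erase (Ioo i R) (fun k => ((LL n R i : ℚ) - (LL n R k : ℚ))) hrIoo,
      ← Finset.mul_prod_erase (Ioo i R) (fun k => ((LL l R i : ℚ) - (LL l R k : ℚ))) hrIoo,
      Finset.prod_congr rfl (fun k hk => by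
        rw [hLn i, if_neg hir, hLn k, if_neg (Finset.mem_erase.mp hk).1] :
        ∀ k ∈ (Ioo i R).erase r, ((LL n R i : ℚ) - (LL n R k : ℚ)) =
          ((LL l R i : ℚ) - (LL l R k : ℚ))),
      hLn i, if_neg hir, hLn r, if_pos rfl]
    push_cast
    ring
  have ea : (∏ i ∈ Ioo r R, ∏ k ∈ Ioo i R, ((LL n R i : ℚ) - (LL n R k : ℚ)))
      = ∏ i ∈ Ioo r R, ∏ k ∈ Ioo i R, ((LL l R i : ℚ) - (LL l R k : ℚ)) := by
    refine Finset.prod_congr rfl fun i hi => Finset.prod_congr rfl fun k hk => ?_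
    rw [Finset.mem_Ioo] at hi hk
    rw [hLn i, if_neg (by omega), hLn k, if_neg (by omega)]
  have eb : (∏ k ∈ Ioo r R, ((LL n R r : ℚ) - (LL n R k : ℚ)))
      = ∏ k ∈ Ioo r R, ((LL l R r : ℚ) - (LL l R k : ℚ) + 1) := by
    refine Finset.prod_congr rfl fun k hk => ?_
    rw [Finset.mem_Ioo] at hk
    rw [hLn r, if_pos rfl, hLn k, if_neg (by omega)]
    push_cast
    ring
  have ed : (∏ i ∈ range r, ∏ k ∈ Ioo i R, ((LL n R i : ℚ) - (LL n R k : ℚ))) *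
      (∏ i ∈ range r, ((LL l R r : ℚ) - (LL l R i : ℚ))) =
      (∏ i ∈ range r, ∏ k ∈ Ioo i R, ((LL l R i : ℚ) - (LL l R k : ℚ))) *
      (∏ i ∈ range r, ((LL l R r : ℚ) - (LL l R i : ℚ) + 1)) := by
    rw [← Finset.prod_mul_distrib, ← Finset.prod_mul_distrib]
    exact Finset.prod_congr rfl per_i
  have G : Pn * Er = Pl * Nr' := by
    rw [hPn, hPl, hEr, hNr',
      prod_split hrR (fun i => ∏ k ∈ Ioo i R, ((LL n R i : ℚ) - (LL n R k : ℚ))),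
      prod_split hrR (fun i => ∏ k ∈ Ioo i R, ((LL l R i : ℚ) - (LL l R k : ℚ))),
      prod_erase_split hrR (fun i => ((LL l R r : ℚ) - (LL l R i : ℚ))),
      prod_erase_split hrR (fun i => ((LL l R r : ℚ) - (LL l R i : ℚ) + 1))]
    rw [ea, eb]
    linear_combination ((∏ k ∈ Ioo r R, ((LL l R r : ℚ) - (LL l R k : ℚ) + 1)) *
      (∏ i ∈ Ioo r R, ∏ k ∈ Ioo i R, ((LL l R i : ℚ) - (LL l R k : ℚ))) *
      (∏ k ∈ Ioo r R, ((LL l R r : ℚ) - (LL l R k : ℚ)))) * ed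
  -- final assembly
  rw [div_eq_div_iff hHn0 (mul_ne_zero hxr1 hEr0)]
  apply mul_right_cancel₀ (mul_ne_zero hPl0 hPn0)
  linear_combination (((LL l R r : ℚ) + 1) * Er * Pn) * keyl - (Nr * Pl) * keyn -
    (Nr * Pl) * hFneq + (((LL l R r : ℚ) + 1) * Fl) * G -
    (((LL l R r : ℚ) + 1) * Fl * Pl) * hNrEq

end HookAux

/-- `Σ_{ν∈𝒰(λ)} H_λ / H_ν = 1`. -/
theorem hook_ratio_sum (l : YoungDiagram) :
    ∑ k ∈ upFinset l, (Hprod l : ℚ) / (Hprod k : ℚ) = 1 := by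
  classical
  set R := l.colLen 0 + 1 with hRdef
  have hR0 : 0 < R := by omega
  have h1 : ∑ k ∈ upFinset l, (Hprod l : ℚ) / (Hprod k : ℚ)
      = ∑ r ∈ (Finset.range R).filter (fun r => HookAux.Addable l r),
          (Hprod l : ℚ) / (Hprod (HookAux.addBox l r) : ℚ) := by
    refine (Finset.sum_bij (fun r _ => HookAux.addBox l r) ?_ ?_ ?_ ?_).symm
    · intro a ha
      rw [upFinset, Set.Finite.mem_toFinset]
      exact HookAux.covers_addBox (Finset.mem_filter.mp ha).2
    · intro a ha b hb hab
      exact HookAux.addBox_inj (Finset.mem_filter.mp ha).2 (Finset.mem_filter.mp hb).2 hab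
    · intro b hb
      rw [upFinset, Set.Finite.mem_toFinset] at hb
      obtain ⟨r, hr, rfl⟩ := HookAux.cover_eq_addBox hb
      exact ⟨r, Finset.mem_filter.mpr ⟨Finset.mem_range.mpr
        (by have := HookAux.addable_le hr; omega), hr⟩, rfl⟩
    · intro a ha
      rfl
  rw [h1]
  have h2 : ∀ r ∈ (Finset.range R).filter (fun r => HookAux.Addable l r),
      (Hprod l : ℚ) / (Hprod (HookAux.addBox l r) : ℚ) =
      (∏ i ∈ Finset.range R, ((HookAux.LL l R r : ℚ) - (HookAux.LL l R i : ℚ) + 1)) /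
        (((HookAux.LL l R r : ℚ) + 1) *
          ∏ i ∈ (Finset.range R).erase r, ((HookAux.LL l R r : ℚ) - (HookAux.LL l R i : ℚ))) := by
    intro r hr
    obtain ⟨hrR, hadd⟩ := Finset.mem_filter.mp hr
    exact HookAux.ratio hadd (by omega) (Finset.mem_range.mp hrR)
  rw [Finset.sum_congr rfl h2]
  rw [Finset.sum_filter_of_ne (by
    intro r hrmem hne0
    by_contra hnadd
    apply hne0
    have hr0 : r ≠ 0 := fun hc => hnadd (Or.inl hc)
    have hrlt : ¬ l.rowLen r < l.rowLen (r - 1) := fun hc => hnadd (Or.inr hc)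
    have hanti := l.rowLen_anti (r - 1) r (by omega)
    have hreq : l.rowLen (r - 1) = l.rowLen r := by omega
    rw [Finset.mem_range] at hrmem
    have hLeq : HookAux.LL l R (r - 1) = HookAux.LL l R r + 1 := by
      unfold HookAux.LL
      rw [hreq]
      omega
    have hzero : ((HookAux.LL l R r : ℚ) - (HookAux.LL l R (r - 1) : ℚ) + 1) = 0 := by
      rw [hLeq]
      push_cast
      ring
    rw [Finset.prod_eq_zero (Finset.mem_range.mpr (show r - 1 < R by omega)) hzero, zero_div])]
  have hinj : Set.InjOn (fun i => (HookAux.LL l R i : ℚ)) (Finset.range R) := by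
    intro a ha b hb hab
    rw [Finset.coe_range, Set.mem_Iio] at ha hb
    simp only at hab
    have : HookAux.LL l R a = HookAux.LL l R b := by exact_mod_cast hab
    by_contra hne
    exact HookAux.LL_ne ha hb hne this
  have hrow0 : l.rowLen (l.colLen 0) = 0 := by
    by_contra hc
    have h1 : (l.colLen 0, 0) ∈ l := YoungDiagram.mem_iff_lt_rowLen.mpr (by omega)
    have := YoungDiagram.mem_iff_lt_colLen.mp h1
    omega
  have h0 : ((HookAux.LL l R (R - 1) : ℚ)) = 0 := by
    have : HookAux.LL l R (R - 1) = 0 := by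
      unfold HookAux.LL
      have : R - 1 = l.colLen 0 := by omega
      rw [this, hrow0]
      omega
    rw [this]
    norm_num
  have hne : ∀ i ∈ Finset.range R, ((HookAux.LL l R i : ℚ)) + 1 ≠ 0 := fun i _ => by positivity
  exact HookAux.claimA R hR0 (fun i => (HookAux.LL l R i : ℚ)) hinj h0 hne
end

section
/- Let λ = (h^v) be the rectangular partition of width h ≥ 1 and height v ≥ 1, μ = (h^{v−1}, h−1), ν₁ = (h+1, h^{v−1}), ν₂ = (h^v, 1). Then 𝒫_λ(λ→ν₁) = (1−t^v)/(1−q^h t^v), 𝒫_λ(λ→ν₂) = t^v(1−q^h)/(1−q^h t^v), 𝒫_λ(μ→ν₁) = qt^{v−1}(1−q^{h−1}t)/(1−q^h t^v), 𝒫_λ(μ→ν₂) = (1−qt^{v−1})/(1−q^h t^v); in particular 𝒫_λ(λ→ν₁)+𝒫_λ(λ→ν₂) = 1 and 𝒫_λ(μ→ν₁)+𝒫_λ(μ→ν₂) = 1. -/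
lemma qq_ne : qq ≠ 0 := by
  simp [qq, IsFractionRing.to_map_eq_zero_iff, MvPolynomial.X_ne_zero]

lemma tt_ne : tt ≠ 0 := by
  simp [tt, IsFractionRing.to_map_eq_zero_iff, MvPolynomial.X_ne_zero]

lemma one_sub_ne (a b : ℕ) (hab : a + b ≠ 0) : (1:Kqt) - qq^a * tt^b ≠ 0 := by
  intro hc
  have h1 : (1:Kqt) = qq^a * tt^b := by linear_combination hc
  have h2 : algebraMap (MvPolynomial (Fin 2) ℚ) Kqt 1 =
      algebraMap (MvPolynomial (Fin 2) ℚ) Kqt (MvPolynomial.X 0 ^ a * MvPolynomial.X 1 ^ b) := by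
    simpa [qq, tt, map_mul, map_pow] using h1
  have h3 := IsFractionRing.injective (MvPolynomial (Fin 2) ℚ) Kqt h2
  have h4 := congrArg MvPolynomial.constantCoeff h3
  simp only [map_one, map_mul, map_pow, MvPolynomial.constantCoeff_X] at h4
  rcases Nat.eq_zero_or_pos a with ha | ha
  · rcases Nat.eq_zero_or_pos b with hb | hb
    · omega
    · rw [ha, pow_zero, one_mul, zero_pow (by omega : b ≠ 0)] at h4
      exact one_ne_zero h4
  · rw [zero_pow (by omega : a ≠ 0), zero_mul] at h4
    exact one_ne_zero h4

lemma telescope (g : ℕ → Kqt) (hg : ∀ k, g k ≠ 0) (n : ℕ) :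
    ∏ j ∈ Finset.range n, g (j+1) / g j = g n / g 0 := by
  induction n with
  | zero => simp [div_self (hg 0)]
  | succ n ih =>
      rw [Finset.prod_range_succ, ih, div_mul_div_comm, mul_comm (g n),
        mul_div_mul_right _ _ (hg n)]

lemma rowLen_eq_of (l : YoungDiagram) (i n : ℕ) (H : ∀ j, (i,j) ∈ l ↔ j < n) :
    l.rowLen i = n := by
  have a : ∀ j, j < l.rowLen i ↔ j < n := fun j =>
    (YoungDiagram.mem_iff_lt_rowLen.symm.trans (H j))
  have h1 := a (l.rowLen i)
  have h2 := a n
  omega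

lemma colLen_eq_of (l : YoungDiagram) (j n : ℕ) (H : ∀ i, (i,j) ∈ l ↔ i < n) :
    l.colLen j = n := by
  have a : ∀ i, i < l.colLen j ↔ i < n := fun i =>
    (YoungDiagram.mem_iff_lt_colLen.symm.trans (H i))
  have h1 := a (l.colLen j)
  have h2 := a n
  omega

lemma one_sub_inv (a : Kqt) (ha : a ≠ 0) : 1 - a⁻¹ = -(a⁻¹ * (1 - a)) := by
  field_simp
  ring

set_option maxHeartbeats 1600000 in
/-- the probabilities for a rectangle `λ = (h^v)`, with
`μ = (h^{v-1}, h-1)`, `ν₁ = (h+1, h^{v-1})`, `ν₂ = (h^v, 1)`. -/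
theorem rectangle_probabilities (h v : ℕ) (hh : 1 ≤ h) (hv : 1 ≤ v)
    (l m n1 n2 : YoungDiagram)
    (hl : l.cells = Finset.range v ×ˢ Finset.range h)
    (hm : m.cells = l.cells.erase (v - 1, h - 1))
    (hn1 : n1.cells = insert (0, h) l.cells)
    (hn2 : n2.cells = insert (v, 0) l.cells) :
    Ptop l n1 = (1 - tt ^ v) / (1 - qq ^ h * tt ^ v) ∧
    Ptop l n2 = tt ^ v * (1 - qq ^ h) / (1 - qq ^ h * tt ^ v) ∧
    Pmove l m n1 = qq * tt ^ (v - 1) * (1 - qq ^ (h - 1) * tt) / (1 - qq ^ h * tt ^ v) ∧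
    Pmove l m n2 = (1 - qq * tt ^ (v - 1)) / (1 - qq ^ h * tt ^ v) ∧
    Ptop l n1 + Ptop l n2 = 1 ∧
    Pmove l m n1 + Pmove l m n2 = 1 := by
  obtain ⟨H, rfl⟩ := Nat.exists_eq_succ_of_ne_zero (by omega : h ≠ 0)
  obtain ⟨V, rfl⟩ := Nat.exists_eq_succ_of_ne_zero (by omega : v ≠ 0)
  clear hh hv
  simp only [Nat.add_sub_cancel, Nat.succ_sub_one] at hm ⊢
  -- membership characterizations
  have memL : ∀ p : ℕ × ℕ, p ∈ l ↔ p.1 < V + 1 ∧ p.2 < H + 1 := by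
    intro p
    rw [← YoungDiagram.mem_cells, hl]
    simp [Finset.mem_product]
  have memM : ∀ p : ℕ × ℕ, p ∈ m ↔ (p.1 < V + 1 ∧ p.2 < H + 1) ∧ p ≠ (V, H) := by
    intro p
    rw [← YoungDiagram.mem_cells, hm, Finset.mem_erase, hl]
    simp only [Finset.mem_product, Finset.mem_range]
    tauto
  have memN1 : ∀ p : ℕ × ℕ, p ∈ n1 ↔ p = (0, H + 1) ∨ (p.1 < V + 1 ∧ p.2 < H + 1) := by
    intro p
    rw [← YoungDiagram.mem_cells, hn1, Finset.mem_insert, hl]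
    simp [Finset.mem_product]
  have memN2 : ∀ p : ℕ × ℕ, p ∈ n2 ↔ p = (V + 1, 0) ∨ (p.1 < V + 1 ∧ p.2 < H + 1) := by
    intro p
    rw [← YoungDiagram.mem_cells, hn2, Finset.mem_insert, hl]
    simp [Finset.mem_product]
  -- diffBoxes
  have dln1 : diffBox l n1 = (0, H + 1) := by
    have hs : n1.cells \ l.cells = {(0, H + 1)} := by
      ext ⟨i, j⟩
      simp only [hn1, hl, Finset.mem_sdiff, Finset.mem_insert, Finset.mem_product,
        Finset.mem_range, Prod.mk.injEq, Finset.mem_singleton, true_and, and_true]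
      omega
    rw [diffBox, hs, Finset.sup_singleton, id]
  have dln2 : diffBox l n2 = (V + 1, 0) := by
    have hs : n2.cells \ l.cells = {(V + 1, 0)} := by
      ext ⟨i, j⟩
      simp only [hn2, hl, Finset.mem_sdiff, Finset.mem_insert, Finset.mem_product,
        Finset.mem_range, Prod.mk.injEq, Finset.mem_singleton, true_and, and_true]
      omega
    rw [diffBox, hs, Finset.sup_singleton, id]
  have dml : diffBox m l = (V, H) := by
    have hs : l.cells \ m.cells = {(V, H)} := by
      ext ⟨i, j⟩
      simp only [hm, hl, Finset.mem_sdiff, Finset.mem_erase, Finset.mem_product,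
        Finset.mem_range, Prod.mk.injEq, Finset.mem_singleton, ne_eq, not_and, true_and, and_true]
      omega
    rw [diffBox, hs, Finset.sup_singleton, id]
  -- row/column lengths
  have rl_l : ∀ i, i < V + 1 → l.rowLen i = H + 1 := by
    intro i hi
    refine rowLen_eq_of l i (H + 1) fun j => ?_
    simp only [memL]
    omega
  have cl_l : ∀ j, j < H + 1 → l.colLen j = V + 1 := by
    intro j hj
    refine colLen_eq_of l j (V + 1) fun i => ?_
    simp only [memL]
    omega
  have rl_n1_0 : n1.rowLen 0 = H + 2 := by
    refine rowLen_eq_of n1 0 (H + 2) fun j => ?_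
    simp only [memN1, Prod.mk.injEq, true_and, and_true]
    omega
  have cl_n1 : ∀ j, j < H + 1 → n1.colLen j = V + 1 := by
    intro j hj
    refine colLen_eq_of n1 j (V + 1) fun i => ?_
    simp only [memN1, Prod.mk.injEq, true_and, and_true]
    omega
  have rl_n2 : ∀ i, i < V + 1 → n2.rowLen i = H + 1 := by
    intro i hi
    refine rowLen_eq_of n2 i (H + 1) fun j => ?_
    simp only [memN2, Prod.mk.injEq, true_and, and_true]
    omega
  have cl_n2_0 : n2.colLen 0 = V + 2 := by
    refine colLen_eq_of n2 0 (V + 2) fun i => ?_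
    simp only [memN2, Prod.mk.injEq, true_and, and_true]
    omega
  have rl_m : ∀ i, i < V → m.rowLen i = H + 1 := by
    intro i hi
    refine rowLen_eq_of m i (H + 1) fun j => ?_
    simp only [memM, Prod.mk.injEq, ne_eq, not_and, true_and, and_true]
    omega
  have rl_mV : m.rowLen V = H := by
    refine rowLen_eq_of m V H fun j => ?_
    simp only [memM, Prod.mk.injEq, ne_eq, not_and, true_and, and_true]
    omega
  have cl_m : ∀ j, j < H → m.colLen j = V + 1 := by
    intro j hj
    refine colLen_eq_of m j (V + 1) fun i => ?_
    simp only [memM, Prod.mk.injEq, ne_eq, not_and, true_and, and_true]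
    omega
  have cl_mH : m.colLen H = V := by
    refine colLen_eq_of m H V fun i => ?_
    simp only [memM, Prod.mk.injEq, ne_eq, not_and, true_and, and_true]
    omega
  -- row/col cell sets
  have rc1 : rowCells l n1 = (Finset.range (H + 1)).image (fun j => (0, j)) := by
    rw [rowCells, dln1, hl]
    ext ⟨i, j⟩
    simp only [Finset.mem_filter, Finset.mem_product, Finset.mem_range, Finset.mem_image,
      Prod.mk.injEq]
    constructor
    · rintro ⟨⟨hi, hj⟩, rfl⟩
      exact ⟨j, hj, rfl, rfl⟩
    · rintro ⟨a, ha, rfl, rfl⟩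
      exact ⟨⟨by omega, ha⟩, rfl⟩
  have cc1 : colCells l n1 = ∅ := by
    rw [colCells, dln1, hl]
    ext ⟨i, j⟩
    simp only [Finset.mem_filter, Finset.mem_product, Finset.mem_range, Finset.notMem_empty,
      iff_false, not_and]
    omega
  have rc2 : rowCells l n2 = ∅ := by
    rw [rowCells, dln2, hl]
    ext ⟨i, j⟩
    simp only [Finset.mem_filter, Finset.mem_product, Finset.mem_range, Finset.notMem_empty,
      iff_false, not_and]
    omega
  have cc2 : colCells l n2 = (Finset.range (V + 1)).image (fun i => (i, 0)) := by
    rw [colCells, dln2, hl]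
    ext ⟨i, j⟩
    simp only [Finset.mem_filter, Finset.mem_product, Finset.mem_range, Finset.mem_image,
      Prod.mk.injEq]
    constructor
    · rintro ⟨⟨hi, hj⟩, rfl⟩
      exact ⟨i, hi, rfl, rfl⟩
    · rintro ⟨a, ha, rfl, rfl⟩
      exact ⟨⟨ha, by omega⟩, rfl⟩
  have rcm : rowCells m l = (Finset.range H).image (fun j => (V, j)) := by
    rw [rowCells, dml, hm, hl]
    ext ⟨i, j⟩
    simp only [Finset.mem_filter, Finset.mem_erase, Finset.mem_product, Finset.mem_range,
      Finset.mem_image, Prod.mk.injEq, ne_eq]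
    constructor
    · rintro ⟨⟨hne, hi, hj⟩, rfl⟩
      refine ⟨j, by omega, rfl, rfl⟩
    · rintro ⟨a, ha, rfl, rfl⟩
      exact ⟨⟨by omega, by omega, by omega⟩, rfl⟩
  have ccm : colCells m l = (Finset.range V).image (fun i => (i, H)) := by
    rw [colCells, dml, hm, hl]
    ext ⟨i, j⟩
    simp only [Finset.mem_filter, Finset.mem_erase, Finset.mem_product, Finset.mem_range,
      Finset.mem_image, Prod.mk.injEq, ne_eq]
    constructor
    · rintro ⟨⟨hne, hi, hj⟩, rfl⟩
      refine ⟨i, by omega, rfl, rfl⟩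
    · rintro ⟨a, ha, rfl, rfl⟩
      exact ⟨⟨by omega, by omega, by omega⟩, rfl⟩
  -- nonvanishing facts
  have nzQT : ∀ a b : ℕ, a + b ≠ 0 → (1:Kqt) - qq ^ a * tt ^ b ≠ 0 := one_sub_ne
  have nz1 : (1:Kqt) - tt ^ (V + 1) ≠ 0 := by
    simpa using nzQT 0 (V + 1) (by omega)
  have nz2 : (1:Kqt) - qq ^ (H + 1) ≠ 0 := by
    simpa using nzQT (H + 1) 0 (by omega)
  have nz3 : (1:Kqt) - qq ^ (H + 1) * tt ^ (V + 1) ≠ 0 := nzQT _ _ (by omega)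
  have nz4 : (1:Kqt) - qq ^ H * tt ≠ 0 := by
    simpa using nzQT H 1 (by omega)
  have nz5 : (1:Kqt) - qq * tt ^ V ≠ 0 := by
    simpa using nzQT 1 V (by omega)
  have nz6 : (1:Kqt) - qq ≠ 0 := by
    simpa using nzQT 1 0 (by omega)
  have nz7 : (1:Kqt) - tt ≠ 0 := by
    simpa using nzQT 0 1 (by omega)
  -- the three alpha computations
  have inj0 : ∀ a ∈ Finset.range (H + 1), ∀ b ∈ Finset.range (H + 1),
      (fun j => ((0:ℕ), j)) a = (fun j => ((0:ℕ), j)) b → a = b := by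
    intro a _ b _ hab
    simpa using hab
  have A1 : alphaE l n1 = (1 - tt ^ (V + 1)) / (1 - qq ^ (H + 1) * tt ^ (V + 1)) := by
    rw [alphaE, rc1, cc1, Finset.prod_empty, mul_one, Finset.prod_image inj0]
    have step : ∀ j ∈ Finset.range (H + 1),
        hkL l (0, j) / hkL n1 (0, j)
          = (fun k => 1 - qq ^ (H + 1 - k) * tt ^ (V + 1)) (j + 1)
            / (fun k => 1 - qq ^ (H + 1 - k) * tt ^ (V + 1)) j := by
      intro j hj
      simp only [Finset.mem_range] at hj
      simp only [hkL, armLen, legLen]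
      rw [rl_l 0 (by omega), cl_l j (by omega), rl_n1_0, cl_n1 j (by omega)]
      have e1 : H + 2 - (j + 1) = H + 1 - j := by omega
      have e2 : V + 1 - (0 + 1) + 1 = V + 1 := by omega
      rw [e1, e2]
    rw [Finset.prod_congr rfl step,
      telescope _ (fun k => nzQT (H + 1 - k) (V + 1) (by omega)) (H + 1)]
    norm_num
  have injc : ∀ a ∈ Finset.range (V + 1), ∀ b ∈ Finset.range (V + 1),
      (fun i => (i, (0:ℕ))) a = (fun i => (i, (0:ℕ))) b → a = b := by
    intro a _ b _ hab
    simpa using hab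
  have A2 : alphaE l n2 = (1 - qq ^ (H + 1)) / (1 - qq ^ (H + 1) * tt ^ (V + 1)) := by
    rw [alphaE, rc2, cc2, Finset.prod_empty, one_mul, Finset.prod_image injc]
    have step : ∀ i ∈ Finset.range (V + 1),
        hkA l (i, 0) / hkA n2 (i, 0)
          = (fun k => 1 - qq ^ (H + 1) * tt ^ (V + 1 - k)) (i + 1)
            / (fun k => 1 - qq ^ (H + 1) * tt ^ (V + 1 - k)) i := by
      intro i hi
      simp only [Finset.mem_range] at hi
      simp only [hkA, armLen, legLen]
      rw [rl_l i (by omega), cl_l 0 (by omega), rl_n2 i (by omega), cl_n2_0]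
      have e1 : H + 1 - (0 + 1) + 1 = H + 1 := by omega
      have e2 : V + 2 - (i + 1) = V + 1 - i := by omega
      rw [e1, e2]
    rw [Finset.prod_congr rfl step,
      telescope _ (fun k => nzQT (H + 1) (V + 1 - k) (by omega)) (V + 1)]
    norm_num
  have injrm : ∀ a ∈ Finset.range H, ∀ b ∈ Finset.range H,
      (fun j => (V, j)) a = (fun j => (V, j)) b → a = b := by
    intro a _ b _ hab
    simpa using hab
  have injcm : ∀ a ∈ Finset.range V, ∀ b ∈ Finset.range V,
      (fun i => (i, H)) a = (fun i => (i, H)) b → a = b := by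
    intro a _ b _ hab
    simpa using hab
  have Am : alphaE m l
      = ((1 - tt) / (1 - qq ^ H * tt)) * ((1 - qq) / (1 - qq * tt ^ V)) := by
    rw [alphaE, rcm, ccm, Finset.prod_image injrm, Finset.prod_image injcm]
    have step1 : ∀ j ∈ Finset.range H,
        hkL m (V, j) / hkL l (V, j)
          = (fun k => 1 - qq ^ (H - k) * tt) (j + 1)
            / (fun k => 1 - qq ^ (H - k) * tt) j := by
      intro j hj
      simp only [Finset.mem_range] at hj
      simp only [hkL, armLen, legLen]
      rw [rl_mV, cl_m j (by omega), rl_l V (by omega), cl_l j (by omega)]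
      have e1 : H - (j + 1) = H - (j + 1) := rfl
      have e2 : V + 1 - (V + 1) + 1 = 1 := by omega
      have e3 : H + 1 - (j + 1) = H - j := by omega
      rw [e2, e3, pow_one]
    have step2 : ∀ i ∈ Finset.range V,
        hkA m (i, H) / hkA l (i, H)
          = (fun k => 1 - qq * tt ^ (V - k)) (i + 1)
            / (fun k => 1 - qq * tt ^ (V - k)) i := by
      intro i hi
      simp only [Finset.mem_range] at hi
      simp only [hkA, armLen, legLen]
      rw [rl_m i (by omega), cl_mH, rl_l i (by omega), cl_l H (by omega)]
      have e1 : H + 1 - (H + 1) + 1 = 1 := by omega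
      have e2 : V - (i + 1) = V - (i + 1) := rfl
      have e3 : V + 1 - (i + 1) = V - i := by omega
      rw [e1, e3, pow_one]
    rw [Finset.prod_congr rfl step1, Finset.prod_congr rfl step2,
      telescope (fun k => 1 - qq ^ (H - k) * tt)
        (fun k => by simpa using nzQT (H - k) 1 (by omega)) H,
      telescope (fun k => 1 - qq * tt ^ (V - k))
        (fun k => by simpa using nzQT 1 (V - k) (by omega)) V]
    norm_num
  have AmNe : alphaE m l ≠ 0 := by
    rw [Am]
    exact mul_ne_zero (div_ne_zero nz7 nz4) (div_ne_zero nz6 nz5)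
  -- eta computations
  have E1 : etaE (V, H) (0, H + 1)
      = (1 - qq) * (1 - tt) /
        ((1 - (qq * tt ^ V)⁻¹) * (1 - (tt ^ (V + 1))⁻¹)) := by
    rw [etaE]
    have e1 : ((H : ℤ) - ((0, H + 1) : ℕ × ℕ).2) = -1 := by push_cast; ring
    have e2 : ((((0, H + 1) : ℕ × ℕ).1 : ℤ) - (V : ℤ)) = -(V : ℤ) := by push_cast; ring
    have e3 : ((H : ℤ) - ((0, H + 1) : ℕ × ℕ).2 + 1) = 0 := by push_cast; ring
    have e4 : ((((0, H + 1) : ℕ × ℕ).1 : ℤ) - (V : ℤ) - 1) = -((V : ℤ) + 1) := by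
      push_cast; ring
    rw [e1, e2,
      show (-1 + 1 : ℤ) = 0 by ring,
      show (-(V:ℤ) - 1 : ℤ) = -((V + 1 : ℕ) : ℤ) by push_cast; ring]
    simp only [zpow_zero, zpow_neg, zpow_natCast, zpow_one, one_mul]
    rw [← mul_inv]
  have E2 : etaE (V, H) (V + 1, 0)
      = (1 - qq) * (1 - tt) / ((1 - qq ^ H * tt) * (1 - qq ^ (H + 1))) := by
    rw [etaE]
    have e1 : ((H : ℤ) - (((V + 1, 0) : ℕ × ℕ).2 : ℤ)) = ((H : ℕ) : ℤ) := by push_cast; ring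
    have e2 : (((((V + 1, 0)) : ℕ × ℕ).1 : ℤ) - (V : ℤ)) = (1 : ℤ) := by push_cast; ring
    rw [e1, e2,
      show ((H:ℤ) + 1) = ((H + 1 : ℕ) : ℤ) by push_cast; ring,
      show ((1:ℤ) - 1) = (0:ℤ) by ring]
    simp only [zpow_natCast, zpow_one, zpow_zero, mul_one]
  -- the four probabilities
  have G1 : Ptop l n1 = (1 - tt ^ (V + 1)) / (1 - qq ^ (H + 1) * tt ^ (V + 1)) := by
    rw [Ptop, dln1, A1]
    norm_num
  have G2 : Ptop l n2
      = tt ^ (V + 1) * (1 - qq ^ (H + 1)) / (1 - qq ^ (H + 1) * tt ^ (V + 1)) := by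
    rw [Ptop, dln2, A2]
    ring
  have E1' : (1 - qq) * (1 - tt) / ((1 - (qq * tt ^ V)⁻¹) * (1 - (tt ^ (V + 1))⁻¹))
      = qq * tt ^ (2 * V + 1) * ((1 - qq) * (1 - tt))
          / ((1 - qq * tt ^ V) * (1 - tt ^ (V + 1))) := by
    rw [one_sub_inv _ (mul_ne_zero qq_ne (pow_ne_zero V tt_ne)),
      one_sub_inv _ (pow_ne_zero (V + 1) tt_ne), neg_mul_neg]
    field_simp
    try rw [div_eq_iff (by apply_rules [mul_ne_zero, pow_ne_zero, qq_ne, tt_ne,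
      nz1, nz2, nz3, nz4, nz5, nz6, nz7] <;> omega)]
    ring
  have G3 : Pmove l m n1
      = qq * tt ^ V * (1 - qq ^ H * tt) / (1 - qq ^ (H + 1) * tt ^ (V + 1)) := by
    rw [Pmove, dln1, dml, A1, Am, E1, E1']
    have e0 : ((((0, H + 1) : ℕ × ℕ).1 : ℤ) - (((V, H) : ℕ × ℕ).1 : ℤ) - 1)
        = -((V + 1 : ℕ) : ℤ) := by push_cast; ring
    rw [e0, zpow_neg, zpow_natCast]
    field_simp
    have hX : (1:Kqt) - tt ^ (V + 1) * qq ^ (H + 1) ≠ 0 := by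
      rw [mul_comm (tt ^ (V + 1))]; exact nz3
    rw [div_eq_div_iff (mul_ne_zero (pow_ne_zero _ tt_ne) hX) hX]
    ring
  have G4 : Pmove l m n2
      = (1 - qq * tt ^ V) / (1 - qq ^ (H + 1) * tt ^ (V + 1)) := by
    rw [Pmove, dln2, dml, A2, Am, E2]
    have e0 : ((((V + 1, 0) : ℕ × ℕ).1 : ℤ) - (((V, H) : ℕ × ℕ).1 : ℤ) - 1) = 0 := by
      push_cast; ring
    rw [e0, zpow_zero, one_mul]
    have hY : (1:Kqt) - tt * qq ^ H ≠ 0 := by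
      rw [mul_comm tt]; exact nz4
    field_simp
  refine ⟨G1, G2, G3, G4, ?_, ?_⟩
  · rw [G1, G2]
    rw [div_add_div _ _ nz3 nz3, div_eq_one_iff_eq (mul_ne_zero nz3 nz3)]
    ring
  · rw [G3, G4]
    rw [div_add_div _ _ nz3 nz3, div_eq_one_iff_eq (mul_ne_zero nz3 nz3)]
    ring
end
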